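/- arXiv:1807.07518 — 6 statements merged into one kernel-verified Lean document; each statement's English description precedes it below -/
import Mathlib

section
/- Let θ ∈ (0, π) be such that θ/(2π) is irrational, and let x be a real number with |x·sin θ| ≤ 1. Then there exist infinitely many positive integers m such that |sin((m+1)θ)/sin θ − x| < 6π/(sin θ · (m+1)). -/
open Real

lemma sin_lip (a b : ℝ) : |Real.sin a - Real.sin b| ≤ |a - b| := by
  rw [Real.sin_sub_sin]
  have e : |2 * Real.sin ((a - b) / 2) * Real.cos ((a + b) / 2)|
      = 2 * |Real.sin ((a - b) / 2)| * |Real.cos ((a + b) / 2)| := by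
    rw [abs_mul, abs_mul]; norm_num
  have h1 : |Real.sin ((a - b) / 2)| ≤ |a - b| / 2 := by
    have := Real.abs_sin_le_abs (x := (a - b) / 2)
    rwa [abs_div, abs_two] at this
  have h2 : |Real.cos ((a + b) / 2)| ≤ 1 := Real.abs_cos_le_one _
  have h3 : (0:ℝ) ≤ |Real.sin ((a - b) / 2)| := abs_nonneg _
  have h4 : (0:ℝ) ≤ |Real.cos ((a + b) / 2)| := abs_nonneg _
  rw [e]
  nlinarith

lemma grid_lemma (α β : ℝ) (p : ℤ) (q : ℕ) (hq : 0 < q) (hcop : IsCoprime p (q : ℤ))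
    (happ : |α - p / q| < 1 / (q : ℝ)^2) :
    ∃ n : ℕ, ∃ j : ℤ, 1 ≤ n ∧ n ≤ q ∧ |n * α - β - j| ≤ 3 / (2 * q) := by
  obtain ⟨u, v, huv⟩ := hcop
  set r : ℤ := round ((q : ℝ) * β) with hr
  set M : ℤ := r * u with hM
  have hqZ : (q : ℤ) ≠ 0 := by exact_mod_cast hq.ne'
  set n' : ℤ := M % q with hn'
  have hn'0 : 0 ≤ n' := Int.emod_nonneg M hqZ
  have hn'lt : n' < q := Int.emod_lt_of_pos M (by exact_mod_cast hq)
  set n : ℕ := if n' = 0 then q else n'.toNat with hn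
  have hn1 : 1 ≤ n := by
    rw [hn]; split
    · exact hq
    · omega
  have hnq : n ≤ q := by
    rw [hn]; split
    · exact le_refl q
    · omega
  have hnZ : (q:ℤ) ∣ (n : ℤ) - M := by
    have h1 : (q:ℤ) ∣ M - n' := Int.dvd_self_sub_of_emod_eq rfl
    by_cases h : n' = 0
    · have hM' : (q:ℤ) ∣ M := by rw [h, sub_zero] at h1; exact h1
      have hnq' : n = q := by rw [hn, if_pos h]
      rw [hnq']
      exact dvd_sub (dvd_refl _) hM'
    · have hnn : (n:ℤ) = n' := by
        rw [hn, if_neg h]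
        exact Int.toNat_of_nonneg hn'0
      rw [hnn]
      exact (dvd_sub_comm).mp h1
  have hMp : (q:ℤ) ∣ M * p - r := by
    have : M * p - r = -(r * v) * q := by
      have : u * p = 1 - v * q := by linarith [huv]
      calc M * p - r = r * (u * p) - r := by ring
        _ = r * (1 - v * q) - r := by rw [this]
        _ = -(r * v) * q := by ring
    exact ⟨-(r * v), by linarith [this]⟩
  have hnp : (q:ℤ) ∣ (n:ℤ) * p - r := by
    have : (n:ℤ) * p - r = ((n:ℤ) - M) * p + (M * p - r) := by ring
    rw [this]
    exact dvd_add (Dvd.dvd.mul_right hnZ p) hMp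
  obtain ⟨t, ht⟩ := hnp
  refine ⟨n, t, hn1, hnq, ?_⟩
  have hqR : (0:ℝ) < q := by exact_mod_cast hq
  have key : (n:ℝ) * α - β - t = (n:ℝ) * (α - p / q) + (r - (q:ℝ) * β) / q := by
    have hcast : (n:ℝ) * p - r = q * t := by exact_mod_cast ht
    field_simp
    nlinarith [hcast]
  rw [key]
  have h1 : |(n:ℝ) * (α - p / q)| ≤ 1 / q := by
    rw [abs_mul, abs_of_nonneg (by positivity : (0:ℝ) ≤ (n:ℝ))]
    calc (n:ℝ) * |α - p / q| ≤ (q:ℝ) * |α - p / q| := by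
          gcongr
      _ ≤ (q:ℝ) * (1 / q^2) := by gcongr
      _ = 1 / q := by field_simp
  have h2 : |((r:ℝ) - (q:ℝ) * β) / q| ≤ (1/2) / q := by
    rw [abs_div, abs_of_pos hqR]
    gcongr
    rw [abs_sub_comm]
    exact abs_sub_round _
  calc |(n:ℝ) * (α - p / q) + (r - (q:ℝ) * β) / q|
      ≤ |(n:ℝ) * (α - p / q)| + |((r:ℝ) - (q:ℝ) * β) / q| := abs_add_le _ _
    _ ≤ 1 / q + (1/2) / q := add_le_add h1 h2
    _ = 3 / (2 * q) := by field_simp; ring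

lemma exists_good_q (α : ℝ) (hα : Irrational α) (Q : ℕ) :
    ∃ p : ℤ, ∃ q : ℕ, Q < q ∧ IsCoprime p (q:ℤ) ∧ |α - p / q| < 1 / (q : ℝ)^2 := by
  have hinf := Real.infinite_rat_abs_sub_lt_one_div_den_sq_of_irrational hα
  -- there is an element with denominator > Q
  by_contra hcon
  push_neg at hcon
  apply hinf
  set A : ℤ := ⌈(|α| + 1) * Q⌉ with hA
  have hsub : {ξ : ℚ | |α - ξ| < 1 / (ξ.den : ℝ)^2} ⊆
      (fun nd : ℤ × ℕ => (nd.1 : ℚ) / nd.2) '' ↑(Finset.Icc (-A) A ×ˢ Finset.Icc 0 Q) := by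
    intro ξ hξ
    have hden : ξ.den ≤ Q := by
      by_contra hd
      push_neg at hd
      have hcop : IsCoprime (ξ.num) ((ξ.den : ℕ) : ℤ) := by
        rw [Int.isCoprime_iff_gcd_eq_one]
        simpa [Int.gcd] using ξ.reduced
      have := hcon ξ.num ξ.den hd hcop
      rw [← Rat.cast_def] at this
      exact absurd hξ (by simpa using this)
    have hd1 : (1:ℝ) ≤ ξ.den := by exact_mod_cast ξ.pos
    have hb : |α - (ξ:ℝ)| < 1 := lt_of_lt_of_le hξ (by
      rw [div_le_one (by positivity)]
      nlinarith)
    have hξb : |(ξ:ℝ)| ≤ |α| + 1 := by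
      have := abs_sub_abs_le_abs_sub (ξ:ℝ) α
      rw [abs_sub_comm] at hb
      linarith [abs_sub_abs_le_abs_sub (ξ:ℝ) α, hb, abs_abs (ξ:ℝ)]
    have hnum : |ξ.num| ≤ A := by
      have h1 : (|ξ.num| : ℝ) = |(ξ:ℝ)| * ξ.den := by
        rw [← abs_of_pos (show (0:ℝ) < (ξ.den:ℝ) by positivity), ← abs_mul]
        congr 1
        push_cast [Rat.cast_def]
        field_simp
      have h2 : (|ξ.num| : ℝ) ≤ (|α| + 1) * Q := by
        rw [h1]
        have : (ξ.den : ℝ) ≤ Q := by exact_mod_cast hden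
        have h0 : (0:ℝ) ≤ |(ξ:ℝ)| := abs_nonneg _
        nlinarith
      exact_mod_cast h2.trans (Int.le_ceil _)
    refine ⟨(ξ.num, ξ.den), ?_, ?_⟩
    · simp only [Finset.coe_product, Set.mem_prod, Finset.mem_coe, Finset.mem_Icc]
      exact ⟨⟨neg_le_of_abs_le hnum, le_of_abs_le hnum⟩, ⟨Nat.zero_le _, hden⟩⟩
    · simp [Rat.num_div_den]
  exact Set.Finite.subset (Set.Finite.image _ (Finset.finite_toSet _)) hsub

lemma key_lemma (α β : ℝ) (hα : Irrational α) (N : ℕ) :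
    ∃ n : ℕ, ∃ j : ℤ, N < n ∧ |n * α - β - j| < 3 / n := by
  by_cases hA : ∃ k : ℕ, ∃ i : ℤ, 1 ≤ k ∧ k ≤ N ∧ (k:ℝ) * α - β = i
  · obtain ⟨k, i, hk1, hkN, hki⟩ := hA
    obtain ⟨p, q, hq, _, happ⟩ := exists_good_q α hα (N + k)
    have hqpos : 0 < q := by omega
    have hqR : (0:ℝ) < q := by exact_mod_cast hqpos
    refine ⟨k + q, i + p, by omega, ?_⟩
    have hstep : ((k + q : ℕ) : ℝ) * α - β - ((i + p : ℤ) : ℝ) = (q:ℝ) * α - p := by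
      push_cast
      linarith [hki]
    rw [hstep]
    have h1 : |(q:ℝ) * α - p| < 1 / q := by
      have : |(q:ℝ) * α - p| = (q:ℝ) * |α - p / q| := by
        rw [← abs_of_pos hqR, ← abs_mul]
        congr 1
        field_simp
        rw [abs_of_pos hqR]; ring
      rw [this]
      calc (q:ℝ) * |α - p/q| < (q:ℝ) * (1 / q^2) := by gcongr
        _ = 1 / q := by field_simp
    have h2 : 1 / (q:ℝ) < 3 / ((k + q : ℕ) : ℝ) := by
      rw [div_lt_div_iff₀ hqR (by positivity)]
      push_cast
      have : (k : ℝ) ≤ N + k := by push_cast; linarith [Nat.cast_nonneg (α := ℝ) N]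
      have hq' : ((N + k : ℕ) : ℝ) < q := by exact_mod_cast hq
      push_cast at hq'
      linarith
    linarith
  · push_neg at hA
    -- ε lower bound on distances for k ≤ N
    have hpos : ∀ k ∈ Finset.Icc 1 N, 0 < |((k:ℝ) * α - β) - round ((k:ℝ) * α - β)| := by
      intro k hk
      rw [Finset.mem_Icc] at hk
      rw [abs_pos, sub_ne_zero]
      intro h
      exact hA k (round ((k:ℝ) * α - β)) hk.1 hk.2 h
    obtain ⟨ε, hε, hεle⟩ : ∃ ε > 0, ∀ k ∈ Finset.Icc 1 N,
        ε ≤ |((k:ℝ) * α - β) - round ((k:ℝ) * α - β)| := by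
      rcases Finset.eq_empty_or_nonempty (Finset.Icc 1 N) with h | h
      · exact ⟨1, one_pos, by simp [h]⟩
      · obtain ⟨b, hb, hbmin⟩ := Finset.exists_min_image (Finset.Icc 1 N)
          (fun k : ℕ => |((k:ℝ) * α - β) - round ((k:ℝ) * α - β)|) h
        exact ⟨_, hpos b hb, hbmin⟩
    obtain ⟨p, q, hq, hcop, happ⟩ := exists_good_q α hα (max N ⌈3 / (2 * ε)⌉₊)
    have hqN : N < q := lt_of_le_of_lt (le_max_left _ _) hq
    have hqpos : 0 < q := by omega
    have hqR : (0:ℝ) < q := by exact_mod_cast hqpos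
    have hsmall : 3 / (2 * (q:ℝ)) < ε := by
      have h1 : (⌈3 / (2 * ε)⌉₊ : ℝ) < q := by
        exact_mod_cast lt_of_le_of_lt (le_max_right _ _) hq
      have h2 : 3 / (2 * ε) < (q : ℝ) := lt_of_le_of_lt (Nat.le_ceil _) h1
      rw [div_lt_iff₀ (by positivity : (0:ℝ) < 2 * ε)] at h2
      rw [div_lt_iff₀ (by positivity : (0:ℝ) < 2 * (q:ℝ))]
      nlinarith
    obtain ⟨n, j, hn1, hnq, hbound⟩ := grid_lemma α β p q hqpos hcop happ
    have hnN : N < n := by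
      by_contra hcon
      push_neg at hcon
      have hmem : n ∈ Finset.Icc 1 N := Finset.mem_Icc.mpr ⟨hn1, hcon⟩
      have := hεle n hmem
      have hround := round_le ((n:ℝ) * α - β) j
      linarith
    refine ⟨n, j, hnN, ?_⟩
    have hnR : (0:ℝ) < n := by exact_mod_cast hn1
    have : 3 / (2 * (q:ℝ)) < 3 / (n:ℝ) := by
      rw [div_lt_div_iff₀ (by positivity) hnR]
      have : (n:ℝ) ≤ q := by exact_mod_cast hnq
      nlinarith
    linarith

/-- Let `θ ∈ (0, π)` be such that `θ/(2π)` is irrational, and let `x` be a real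
number with `|x·sin θ| ≤ 1`. Then there exist infinitely many positive integers `m` such that
`|sin((m+1)θ)/sin θ − x| < 6π/(sin θ·(m+1))`. -/
theorem statement0 (θ x : ℝ) (hθ : θ ∈ Set.Ioo 0 π)
    (hirr : Irrational (θ / (2 * π))) (hx : |x * Real.sin θ| ≤ 1) :
    {m : ℕ | 0 < m ∧
      |Real.sin ((m + 1) * θ) / Real.sin θ - x| < 6 * π / (Real.sin θ * (m + 1))}.Infinite := by
  obtain ⟨hθ0, hθπ⟩ := hθ
  have hsθ : 0 < Real.sin θ := Real.sin_pos_of_pos_of_lt_pi hθ0 hθπ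
  have hπ : (0:ℝ) < π := Real.pi_pos
  set φ : ℝ := Real.arcsin (x * Real.sin θ) with hφ
  have hsφ : Real.sin φ = x * Real.sin θ := by
    rw [hφ, Real.sin_arcsin (neg_le_of_abs_le hx) (le_of_abs_le hx)]
  apply Set.infinite_of_forall_exists_gt
  intro a
  obtain ⟨n, j, hn, hnj⟩ := key_lemma (θ / (2 * π)) (φ / (2 * π)) hirr (a + 1)
  have hn2 : 2 ≤ n := by omega
  refine ⟨n - 1, ?_, by omega⟩
  have hcast : ((n - 1 : ℕ) : ℝ) + 1 = (n : ℝ) := by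
    have : (1:ℕ) ≤ n := by omega
    push_cast [Nat.cast_sub this]
    ring
  constructor
  · omega
  rw [hcast]
  have hnR : (0:ℝ) < n := by positivity
  have hmul : |(n:ℝ) * θ - φ - j * (2 * π)| < 6 * π / n := by
    have h2π : (0:ℝ) < 2 * π := by positivity
    have heq : (n:ℝ) * θ - φ - j * (2 * π) = ((n:ℝ) * (θ / (2*π)) - φ / (2*π) - j) * (2 * π) := by
      field_simp
    rw [heq, abs_mul, abs_of_pos h2π]
    calc |(n:ℝ) * (θ / (2*π)) - φ / (2*π) - j| * (2 * π) < 3 / n * (2 * π) := by gcongr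
      _ = 6 * π / n := by field_simp; ring
  have hsin : |Real.sin ((n:ℝ) * θ) - Real.sin φ| < 6 * π / n := by
    have hper : Real.sin ((n:ℝ) * θ) = Real.sin ((n:ℝ) * θ - j * (2 * π)) := by
      rw [← Real.sin_add_int_mul_two_pi ((n:ℝ) * θ - j * (2 * π)) j]
      ring_nf
    rw [hper]
    calc |Real.sin ((n:ℝ) * θ - j * (2 * π)) - Real.sin φ|
        ≤ |((n:ℝ) * θ - j * (2 * π)) - φ| := sin_lip _ _
      _ = |(n:ℝ) * θ - φ - j * (2 * π)| := by ring_nf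
      _ < 6 * π / n := hmul
  have hrw : Real.sin ((n:ℝ) * θ) / Real.sin θ - x
      = (Real.sin ((n:ℝ) * θ) - x * Real.sin θ) / Real.sin θ := by
    field_simp
  rw [hrw, abs_div, abs_of_pos hsθ, div_lt_iff₀ hsθ]
  rw [← hsφ]
  calc |Real.sin ((n:ℝ) * θ) - Real.sin φ| < 6 * π / n := hsin
    _ = 6 * π / (Real.sin θ * n) * Real.sin θ := by field_simp
end

section
/- Let α be an irrational real number that is badly approximable, i.e. there exists c > 0 such that ‖n·α‖ > c/n for all positive integers n, and let q_r denote the denominator of the r-th convergent of the simple continued fraction expansion of α. If φ : ℕ → (0, ∞) is decreasing with ∑_{n=1}^∞ φ(n) = ∞, then ∑_{r=0}^∞ ∑_{n=q_r}^{q_{r+1}−1} min(φ(n), ‖q_r·α‖) = ∞. -/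
open Filter Finset

/-- Let `α` be an irrational real number that is badly approximable, i.e. there
exists `c > 0` such that `‖n·α‖ > c/n` for all positive integers `n` (where `‖·‖` is the
distance to a nearest integer), and let `q r` denote the denominator of the `r`-th convergent
of the simple continued fraction expansion of `α`. If `φ : ℕ → (0, ∞)` is decreasing with
`∑ φ(n) = ∞`, then `∑_{r} ∑_{n=q_r}^{q_{r+1}−1} min(φ(n), ‖q_r·α‖) = ∞`. -/
theorem statement7 (α : ℝ) (hirr : Irrational α) (c : ℝ) (hc : 0 < c)
    (hbad : ∀ n : ℕ, 0 < n → c / n < |(n : ℝ) * α - round ((n : ℝ) * α)|)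
    (φ : ℕ → ℝ) (hφpos : ∀ n, 0 < φ n) (hφmono : Antitone φ) (hφdiv : ¬ Summable φ)
    (q : ℕ → ℕ) (hq : ∀ r, (q r : ℝ) = (GenContFract.of α).dens r) :
    ¬ Summable (fun r : ℕ => ∑ n ∈ Finset.Ico (q r) (q (r + 1)),
      min (φ n) |(q r : ℝ) * α - round ((q r : ℝ) * α)|) := by
  intro hsum
  -- the continued fraction of an irrational never terminates
  have hnt : ∀ n, ¬ (GenContFract.of α).TerminatedAt n := by
    intro n hn
    have : (GenContFract.of α).Terminates := ⟨n, hn⟩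
    obtain ⟨qq, hqq⟩ := (GenContFract.terminates_iff_rat α).mp this
    exact hirr ⟨qq, hqq.symm⟩
  have hfib : ∀ r, Nat.fib (r + 1) ≤ q r := by
    intro r
    have := GenContFract.succ_nth_fib_le_of_nth_den (v := α) (n := r) (Or.inr (hnt _))
    rw [← hq r] at this
    exact_mod_cast this
  have hqpos : ∀ r, 0 < q r := fun r =>
    lt_of_lt_of_le (Nat.fib_pos.mpr (Nat.succ_pos r)) (hfib r)
  have hqmono : Monotone q := by
    apply monotone_nat_of_le_succ
    intro r
    have h1 : ((q r : ℝ)) ≤ (q (r + 1) : ℝ) := by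
      rw [hq r, hq (r + 1)]; exact GenContFract.of_den_mono
    exact_mod_cast h1
  have hq0 : q 0 = 1 := by
    have : (q 0 : ℝ) = 1 := by rw [hq 0, GenContFract.zeroth_den_eq_one]
    exact_mod_cast this
  set g : ℕ → ℝ := fun n => min (φ n) (c / n) with hg
  have hgnonneg : ∀ n, 0 ≤ g n := fun n =>
    le_min (hφpos n).le (div_nonneg hc.le (Nat.cast_nonneg n))
  have hg0 : g 0 = 0 := by simp [hg, (hφpos 0).le]
  -- comparison on each block
  set F : ℕ → ℝ := fun r => ∑ n ∈ Finset.Ico (q r) (q (r + 1)), g n with hF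
  have hFle : ∀ r, F r ≤ ∑ n ∈ Finset.Ico (q r) (q (r + 1)),
      min (φ n) |(q r : ℝ) * α - round ((q r : ℝ) * α)| := by
    intro r
    apply Finset.sum_le_sum
    intro n hn
    rw [Finset.mem_Ico] at hn
    refine min_le_min le_rfl ?_
    have hn1 : 0 < n := lt_of_lt_of_le (hqpos r) hn.1
    have h1 : c / (n : ℝ) ≤ c / (q r : ℝ) := by
      apply div_le_div_of_nonneg_left hc.le
      · exact_mod_cast hqpos r
      · exact_mod_cast hn.1
    exact h1.trans (hbad (q r) (hqpos r)).le
  have hFnonneg : ∀ r, 0 ≤ F r := fun r => Finset.sum_nonneg fun n _ => hgnonneg n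
  have hFsum : Summable F := hsum.of_nonneg_of_le hFnonneg hFle
  -- partial sums of F are partial sums of g
  have key : ∀ R, ∑ r ∈ Finset.range R, F r = ∑ n ∈ Finset.Ico (q 0) (q R), g n := by
    intro R
    induction R with
    | zero => simp
    | succ R ih =>
      rw [Finset.sum_range_succ, ih, hF]
      exact Finset.sum_Ico_consecutive _ (hqmono (Nat.zero_le R)) (hqmono (Nat.le_succ R))
  -- hence g is summable
  have hgsum : Summable g := by
    apply summable_of_sum_range_le hgnonneg (c := ∑' r, F r)
    intro N
    obtain ⟨R, hR⟩ : ∃ R, N ≤ q R := ⟨N + 5, by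
      have h1 := hfib (N + 5)
      have h2 := Nat.le_fib_self (n := N + 5 + 1) (by omega)
      omega⟩
    calc ∑ n ∈ Finset.range N, g n
        ≤ ∑ n ∈ Finset.range (q R), g n :=
          Finset.sum_le_sum_of_subset_of_nonneg
            (Finset.range_subset_range.mpr hR) (fun n _ _ => hgnonneg n)
      _ = ∑ n ∈ Finset.Ico (q 0) (q R), g n := by
          rw [Finset.range_eq_Ico, ← Finset.sum_Ico_consecutive _ (Nat.zero_le 1)
            (hq0 ▸ hqmono (Nat.zero_le R)), hq0]
          simp [hg0]
      _ = ∑ r ∈ Finset.range R, F r := (key R).symm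
      _ ≤ ∑' r, F r := Summable.sum_le_tsum _ (fun r _ => hFnonneg r) hFsum
  -- Cauchy condensation to contradict divergence of φ
  have hgmono : ∀ ⦃m n : ℕ⦄, 0 < m → m ≤ n → g n ≤ g m := by
    intro m n hm hmn
    refine min_le_min (hφmono hmn) ?_
    apply div_le_div_of_nonneg_left hc.le
    · exact_mod_cast hm
    · exact_mod_cast hmn
  have h2 : Summable (fun k : ℕ => (2 : ℝ) ^ k * g (2 ^ k)) :=
    (summable_condensed_iff_of_nonneg hgnonneg hgmono).mpr hgsum
  have heq : ∀ k : ℕ, (2 : ℝ) ^ k * g (2 ^ k) = min ((2 : ℝ) ^ k * φ (2 ^ k)) c := by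
    intro k
    have h2k : (0 : ℝ) < 2 ^ k := by positivity
    rw [hg]
    simp only
    rw [mul_min_of_nonneg _ _ h2k.le]
    congr 1
    rw [Nat.cast_pow, Nat.cast_ofNat, mul_div_cancel₀ _ (ne_of_gt h2k)]
  have h3 : Tendsto (fun k : ℕ => (2 : ℝ) ^ k * g (2 ^ k)) atTop (nhds 0) :=
    h2.tendsto_atTop_zero
  have hev : ∀ᶠ k in atTop, (2 : ℝ) ^ k * g (2 ^ k) < c := by
    exact h3.eventually_lt_const hc
  obtain ⟨N, hN⟩ := eventually_atTop.mp hev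
  have h4 : Summable (fun k : ℕ => (2 : ℝ) ^ k * φ (2 ^ k)) := by
    rw [← summable_nat_add_iff N]
    have : Summable (fun k : ℕ => (2 : ℝ) ^ (k + N) * g (2 ^ (k + N))) :=
      (summable_nat_add_iff N).mpr h2
    apply this.congr
    intro k
    have hlt := hN (k + N) (Nat.le_add_left N k)
    rw [heq] at hlt ⊢
    rw [min_eq_left]
    have : (2 : ℝ) ^ (k + N) * φ (2 ^ (k + N)) < c := by
      by_contra h
      push_neg at h
      rw [min_eq_right h] at hlt
      exact absurd hlt (lt_irrefl c)
    exact this.le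
  exact hφdiv ((summable_condensed_iff_of_nonneg (fun n => (hφpos n).le)
    (fun m n _ h => hφmono h)).mp h4)
end

section
/- Let θ ∈ (0, π) be such that θ/(2π) is badly approximable, i.e. there exists c > 0 with ‖n·θ/(2π)‖ > c/n for all positive integers n, and let φ : ℕ → (0, ∞) be decreasing with ∑_{n=1}^∞ φ(n) = ∞. Then for Lebesgue-almost every x in the interval (−1/sin θ, 1/sin θ) there are infinitely many positive integers m with |sin((m+1)θ)/sin θ − x| < (2π/sin θ)·φ(m). -/
open Real MeasureTheory Metric Filter

private lemma abs_sin_sub_sin_le (x y : ℝ) : |Real.sin x - Real.sin y| ≤ |x - y| := by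
  have hs : ∀ t : ℝ, |Real.sin t| ≤ |t| := by
    intro t
    rcases eq_or_ne t 0 with rfl | ht
    · simp
    · exact (Real.abs_sin_lt_abs ht).le
  rw [Real.sin_sub_sin]
  have h1 := hs ((x - y) / 2)
  have h2 := Real.abs_cos_le_one ((x + y) / 2)
  have h3 : |(x - y) / 2| = |x - y| / 2 := by rw [abs_div]; norm_num
  calc |2 * Real.sin ((x - y) / 2) * Real.cos ((x + y) / 2)|
      = 2 * |Real.sin ((x - y) / 2)| * |Real.cos ((x + y) / 2)| := by
        rw [abs_mul, abs_mul, abs_two]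
    _ ≤ 2 * |(x - y) / 2| * 1 := by
        apply mul_le_mul _ h2 (abs_nonneg _) (by positivity)
        exact mul_le_mul_of_nonneg_left h1 (by norm_num)
    _ = |x - y| := by rw [h3]; ring

private lemma infinite_setOf_iff {p : ℕ → Prop} :
    {n | p n}.Infinite ↔ ∀ N, ∃ n, N ≤ n ∧ p n := by
  rw [← Nat.frequently_atTop_iff_infinite, Filter.frequently_atTop]

private lemma gap_sum {ψ : ℕ → ℝ} (hanti : Antitone ψ) (h0 : ∀ i, 0 ≤ ψ i)
    (N G : ℕ) (K : Finset ℕ) (hK : K ⊆ Finset.Icc 1 N)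
    (hmem : ∀ k ∈ K, G + 1 ≤ k)
    (hgap : ∀ k ∈ K, ∀ k' ∈ K, k < k' → G + 1 ≤ k' - k) :
    ((G : ℝ) + 1) * ∑ k ∈ K, ψ k ≤ ∑ i ∈ Finset.Icc 1 N, ψ i := by
  classical
  set B : ℕ → Finset ℕ := fun k => Finset.Ioc (k - (G + 1)) k with hB
  have hcard : ∀ k ∈ K, (B k).card = G + 1 := by
    intro k hk
    have := hmem k hk
    rw [hB, Nat.card_Ioc]
    omega
  have hdisj : (K : Set ℕ).PairwiseDisjoint B := by
    intro k hk k' hk' hne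
    simp only [Function.onFun]
    rcases lt_or_gt_of_ne hne with h | h
    · have hg := hgap k hk k' hk' h
      rw [Finset.disjoint_left]
      intro i hi hi'
      simp only [hB, Finset.mem_Ioc] at hi hi'
      omega
    · have hg := hgap k' hk' k hk h
      rw [Finset.disjoint_left]
      intro i hi hi'
      simp only [hB, Finset.mem_Ioc] at hi hi'
      omega
  have hsub : K.biUnion B ⊆ Finset.Icc 1 N := by
    intro i hi
    rcases Finset.mem_biUnion.mp hi with ⟨k, hk, hik⟩
    simp only [hB, Finset.mem_Ioc] at hik
    have h1 := hmem k hk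
    have h2 := hK hk
    simp only [Finset.mem_Icc] at h2 ⊢
    omega
  calc ((G : ℝ) + 1) * ∑ k ∈ K, ψ k = ∑ k ∈ K, ((G : ℝ) + 1) * ψ k := by
        rw [Finset.mul_sum]
    _ ≤ ∑ k ∈ K, ∑ i ∈ B k, ψ i := by
        apply Finset.sum_le_sum
        intro k hk
        have hle : ∀ i ∈ B k, ψ k ≤ ψ i := by
          intro i hi
          simp only [hB, Finset.mem_Ioc] at hi
          exact hanti hi.2
        have := Finset.card_nsmul_le_sum (B k) ψ (ψ k) hle
        rw [hcard k hk] at this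
        calc ((G : ℝ) + 1) * ψ k = (G + 1 : ℕ) • ψ k := by
              rw [nsmul_eq_mul]; push_cast; ring
          _ ≤ ∑ i ∈ B k, ψ i := this
    _ = ∑ i ∈ K.biUnion B, ψ i := (Finset.sum_biUnion hdisj).symm
    _ ≤ ∑ i ∈ Finset.Icc 1 N, ψ i :=
        Finset.sum_le_sum_of_subset_of_nonneg hsub (fun i _ _ => h0 i)

private lemma coe_one_addCircle : (((1 : ℝ) : AddCircle (1 : ℝ))) = 0 :=
  AddCircle.coe_period 1

private lemma denseRange_zsmul_coe (α : ℝ)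
    (hirr : ∀ p q : ℤ, q ≠ 0 → (q : ℝ) * α ≠ (p : ℝ)) :
    DenseRange (fun n : ℤ => n • ((α : ℝ) : AddCircle (1 : ℝ))) := by
  have hsurj : Function.Surjective ((↑·) : ℝ → AddCircle (1 : ℝ)) :=
    QuotientAddGroup.mk_surjective
  rcases (AddSubgroup.closure {α, 1}).dense_or_cyclic with hd | ⟨r, hr⟩
  · have hmk : DenseRange ((↑·) : ℝ → AddCircle (1 : ℝ)) := hsurj.denseRange
    have h2 : Dense (((↑·) : ℝ → AddCircle (1 : ℝ)) '' (AddSubgroup.closure {α, 1})) :=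
      hmk.dense_image (AddCircle.continuous_mk' 1) hd
    apply h2.mono
    rintro - ⟨x, hx, rfl⟩
    have hx' : ((x : ℝ) : AddCircle (1 : ℝ)) ∈
        AddSubgroup.closure ({((α : ℝ) : AddCircle (1 : ℝ)), 0} : Set (AddCircle (1:ℝ))) := by
      have h3 : (QuotientAddGroup.mk' (AddSubgroup.zmultiples (1:ℝ))) x ∈
          AddSubgroup.map (QuotientAddGroup.mk' (AddSubgroup.zmultiples (1:ℝ)))
            (AddSubgroup.closure {α, 1}) := AddSubgroup.mem_map_of_mem _ hx
      rw [AddMonoidHom.map_closure] at h3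
      simpa [Set.image_pair, coe_one_addCircle] using h3
    have hzero : (0 : AddCircle (1 : ℝ)) ∈ AddSubgroup.closure {((α : ℝ) : AddCircle (1 : ℝ))} :=
      AddSubgroup.zero_mem _
    have hins : AddSubgroup.closure ({((α : ℝ) : AddCircle (1 : ℝ)), 0} : Set (AddCircle (1:ℝ)))
        = AddSubgroup.closure {((α : ℝ) : AddCircle (1 : ℝ))} := by
      apply le_antisymm
      · rw [AddSubgroup.closure_le]
        rintro y (rfl | rfl)
        · exact AddSubgroup.subset_closure rfl
        · exact hzero
      · apply AddSubgroup.closure_mono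
        exact Set.singleton_subset_iff.mpr (Set.mem_insert _ _)
    rw [hins, AddSubgroup.mem_closure_singleton] at hx'
    obtain ⟨n, hn⟩ := hx'
    exact ⟨n, hn⟩
  · exfalso
    have hα : α ∈ AddSubgroup.closure ({α, 1} : Set ℝ) :=
      AddSubgroup.subset_closure (by simp)
    have h1 : (1 : ℝ) ∈ AddSubgroup.closure ({α, 1} : Set ℝ) :=
      AddSubgroup.subset_closure (by simp)
    rw [hr, AddSubgroup.mem_closure_singleton] at hα h1
    obtain ⟨m, hm⟩ := hα
    obtain ⟨n, hn⟩ := h1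
    have hn0 : n ≠ 0 := by
      rintro rfl
      rw [zero_zsmul] at hn
      exact one_ne_zero hn.symm
    apply hirr m n hn0
    have h2 : (n : ℝ) * α = (n : ℝ) * ((m : ℝ) * r) := by
      rw [← hm]; push_cast [zsmul_eq_mul]; ring
    have hnr : (n : ℝ) * r = 1 := by rw [← hn]; push_cast [zsmul_eq_mul]; ring
    rw [h2]
    calc (n : ℝ) * ((m : ℝ) * r) = (m : ℝ) * ((n : ℝ) * r) := by ring
      _ = (m : ℝ) := by rw [hnr, mul_one]

private lemma overlap_bound (α c : ℝ) (hc : 0 < c)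
    (hbad : ∀ k : ℕ, 0 < k → c / k < ‖(((k : ℝ) * α : ℝ) : AddCircle (1 : ℝ))‖)
    (ψ : ℕ → ℝ) (hpos : ∀ n, 0 < ψ n) (h6 : ∀ n, ψ n ≤ 1 / 6) (hanti : Antitone ψ)
    (N n : ℕ) :
    ∑ m ∈ (Finset.Icc 1 N).filter (fun m => n < m),
        volume (closedBall ((((m : ℝ) + 1) * α : ℝ) : AddCircle (1 : ℝ)) (ψ m / 2) ∩
          closedBall ((((n : ℝ) + 1) * α : ℝ) : AddCircle (1 : ℝ)) (ψ n / 2))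
      ≤ ENNReal.ofReal (2 / c * ψ n * ∑ i ∈ Finset.Icc 1 N, ψ i) := by
  classical
  set pt : ℕ → AddCircle (1 : ℝ) := fun m : ℕ => ((((m : ℝ) + 1) * α : ℝ) : AddCircle (1 : ℝ))
    with hpt
  set E : ℕ → Set (AddCircle (1 : ℝ)) :=
    fun m : ℕ => closedBall (pt m) (ψ m / 2) with hE
  have hμE : ∀ m, volume (E m) = ENNReal.ofReal (ψ m) := by
    intro m
    rw [hE, AddCircle.volume_closedBall]
    congr 1
    rw [mul_div_cancel₀ _ (two_ne_zero)]
    exact min_eq_right (by linarith [h6 m])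
  have hdist_eq : ∀ m' n' : ℕ, n' ≤ m' →
      dist (pt m') (pt n') = ‖((((m' - n' : ℕ) : ℝ) * α : ℝ) : AddCircle (1 : ℝ))‖ := by
    intro m' n' h
    rw [hpt, dist_eq_norm, ← QuotientAddGroup.mk_sub]
    congr 1
    push_cast [Nat.cast_sub h]
    ring
  set D : Finset ℕ :=
    (Finset.Icc 1 N).filter (fun m => n < m ∧ (E m ∩ E n).Nonempty) with hD
  have hstep : ∑ m ∈ (Finset.Icc 1 N).filter (fun m => n < m), volume (E m ∩ E n)
      = ∑ m ∈ D, volume (E m ∩ E n) := by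
    symm
    apply Finset.sum_subset
    · intro m hm
      simp only [hD, Finset.mem_filter] at hm ⊢
      exact ⟨hm.1, hm.2.1⟩
    · intro m hm hnot
      simp only [hD, Finset.mem_filter] at hm hnot
      have hempty : ¬ (E m ∩ E n).Nonempty := by tauto
      rw [Set.not_nonempty_iff_eq_empty] at hempty
      rw [hempty, measure_empty]
  have hDdist : ∀ m ∈ D, dist (pt m) (pt n) ≤ ψ n := by
    intro m hm
    simp only [hD, Finset.mem_filter] at hm
    obtain ⟨hmI, hnm, z, hz⟩ := hm
    obtain ⟨hz1, hz2⟩ := hz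
    rw [hE] at hz1 hz2
    simp only [mem_closedBall] at hz1 hz2
    have h1 : ψ m ≤ ψ n := hanti hnm.le
    calc dist (pt m) (pt n) ≤ dist (pt m) z + dist z (pt n) := dist_triangle _ _ _
      _ ≤ ψ m / 2 + ψ n / 2 := by
          rw [dist_comm (pt m) z]
          exact add_le_add hz1 hz2
      _ ≤ ψ n := by linarith
  set g : ℝ := c / (2 * ψ n) with hg
  have hg0 : 0 < g := div_pos hc (by nlinarith [hpos n])
  set G : ℕ := ⌊g⌋₊ with hG
  have hDmem : ∀ m ∈ D, G + 1 ≤ m := by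
    intro m hm
    have hnm : n < m := by
      simp only [hD, Finset.mem_filter] at hm; exact hm.2.1
    have hdd := hDdist m hm
    rw [hdist_eq m n hnm.le] at hdd
    have hbd := hbad (m - n) (by omega)
    have hk : (0:ℝ) < ((m - n : ℕ) : ℝ) := by
      have : 0 < m - n := by omega
      exact_mod_cast this
    have h2 : c / ((m - n : ℕ) : ℝ) < ψ n := lt_of_lt_of_le hbd hdd
    have h3 : g < ((m - n : ℕ) : ℝ) := by
      rw [hg]
      rw [div_lt_iff₀ hk] at h2
      rw [div_lt_iff₀ (by nlinarith [hpos n] : (0:ℝ) < 2 * ψ n)]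
      nlinarith [hpos n]
    have h4 : g < (m : ℝ) := by
      have : ((m - n : ℕ) : ℝ) ≤ (m : ℝ) := by
        have : m - n ≤ m := Nat.sub_le m n
        exact_mod_cast this
      linarith
    have := (Nat.floor_lt hg0.le).mpr h4
    omega
  have hDgap : ∀ m ∈ D, ∀ m' ∈ D, m < m' → G + 1 ≤ m' - m := by
    intro m hm m' hm' hlt
    have hdd := hDdist m hm
    have hdd' := hDdist m' hm'
    have htri : dist (pt m') (pt m) ≤ 2 * ψ n := by
      calc dist (pt m') (pt m) ≤ dist (pt m') (pt n) + dist (pt n) (pt m) := dist_triangle _ _ _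
        _ ≤ ψ n + ψ n := by
            rw [dist_comm (pt n) (pt m)]
            exact add_le_add hdd' hdd
        _ = 2 * ψ n := by ring
    rw [hdist_eq m' m hlt.le] at htri
    have hbd := hbad (m' - m) (by omega)
    have hk : (0:ℝ) < ((m' - m : ℕ) : ℝ) := by
      have : 0 < m' - m := by omega
      exact_mod_cast this
    have h2 : c / ((m' - m : ℕ) : ℝ) < 2 * ψ n := lt_of_lt_of_le hbd htri
    have h3 : g < ((m' - m : ℕ) : ℝ) := by
      rw [hg]
      rw [div_lt_iff₀ hk] at h2
      rw [div_lt_iff₀ (by nlinarith [hpos n] : (0:ℝ) < 2 * ψ n)]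
      nlinarith [hpos n]
    have := (Nat.floor_lt hg0.le).mpr h3
    omega
  have hblocks := gap_sum hanti (fun i => (hpos i).le) N G D
    (Finset.filter_subset _ _) hDmem hDgap
  have hsum_nonneg : (0:ℝ) ≤ ∑ k ∈ D, ψ k := Finset.sum_nonneg fun i _ => (hpos i).le
  have hS_nonneg : (0:ℝ) ≤ ∑ i ∈ Finset.Icc 1 N, ψ i :=
    Finset.sum_nonneg fun i _ => (hpos i).le
  have hfin : ∑ k ∈ D, ψ k ≤ 2 / c * ψ n * ∑ i ∈ Finset.Icc 1 N, ψ i := by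
    have hge : g < (G : ℝ) + 1 := Nat.lt_floor_add_one g
    have h2 : c ≤ 2 * ψ n * ((G : ℝ) + 1) := by
      rw [hg, div_lt_iff₀ (by nlinarith [hpos n] : (0:ℝ) < 2 * ψ n)] at hge
      nlinarith [hpos n]
    have h5 : c * ∑ k ∈ D, ψ k ≤ 2 * ψ n * ∑ i ∈ Finset.Icc 1 N, ψ i := by
      calc c * ∑ k ∈ D, ψ k ≤ (2 * ψ n * ((G : ℝ) + 1)) * ∑ k ∈ D, ψ k := by
            apply mul_le_mul_of_nonneg_right h2 hsum_nonneg
        _ = 2 * ψ n * (((G : ℝ) + 1) * ∑ k ∈ D, ψ k) := by ring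
        _ ≤ 2 * ψ n * ∑ i ∈ Finset.Icc 1 N, ψ i := by
            apply mul_le_mul_of_nonneg_left hblocks (by nlinarith [hpos n])
    rw [div_mul_eq_mul_div, div_mul_eq_mul_div, le_div_iff₀ hc]
    linarith
  calc ∑ m ∈ (Finset.Icc 1 N).filter (fun m => n < m), volume (E m ∩ E n)
      = ∑ m ∈ D, volume (E m ∩ E n) := hstep
    _ ≤ ∑ m ∈ D, ENNReal.ofReal (ψ m) := by
        apply Finset.sum_le_sum
        intro m _
        exact le_trans (measure_mono Set.inter_subset_left) (le_of_eq (hμE m))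
    _ = ENNReal.ofReal (∑ m ∈ D, ψ m) :=
        (ENNReal.ofReal_sum_of_nonneg fun i _ => (hpos i).le).symm
    _ ≤ ENNReal.ofReal (2 / c * ψ n * ∑ i ∈ Finset.Icc 1 N, ψ i) :=
        ENNReal.ofReal_le_ofReal hfin

private lemma pz_bound (α c : ℝ) (hc : 0 < c)
    (hbad : ∀ k : ℕ, 0 < k → c / k < ‖(((k : ℝ) * α : ℝ) : AddCircle (1 : ℝ))‖)
    (ψ : ℕ → ℝ) (hpos : ∀ n, 0 < ψ n) (h6 : ∀ n, ψ n ≤ 1 / 6) (hanti : Antitone ψ)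
    (N : ℕ) (hS1 : 1 ≤ ∑ i ∈ Finset.Icc 1 N, ψ i) :
    ENNReal.ofReal (1 / (4 * (1 + 4 / c)))
      ≤ volume {y : AddCircle (1 : ℝ) |
          ENNReal.ofReal ((∑ i ∈ Finset.Icc 1 N, ψ i) / 2) <
            ∑ m ∈ Finset.Icc 1 N,
              (closedBall ((((m : ℝ) + 1) * α : ℝ) : AddCircle (1 : ℝ)) (ψ m / 2)).indicator
                1 y} := by
  classical
  set pt : ℕ → AddCircle (1 : ℝ) := fun m : ℕ => ((((m : ℝ) + 1) * α : ℝ) : AddCircle (1 : ℝ))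
    with hpt
  set E : ℕ → Set (AddCircle (1 : ℝ)) := fun m : ℕ => closedBall (pt m) (ψ m / 2) with hE
  have hEmeas : ∀ m, MeasurableSet (E m) := fun m => measurableSet_closedBall
  have hμE : ∀ m, volume (E m) = ENNReal.ofReal (ψ m) := by
    intro m
    rw [hE, AddCircle.volume_closedBall]
    congr 1
    rw [mul_div_cancel₀ _ (two_ne_zero)]
    exact min_eq_right (by linarith [h6 m])
  set I : Finset ℕ := Finset.Icc 1 N with hI
  set S : ℝ := ∑ i ∈ I, ψ i with hSdef
  have hS0 : (0:ℝ) < S := lt_of_lt_of_le one_pos hS1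
  have hN1 : 1 ∈ I := by
    by_contra hmem
    have hN0 : N = 0 := by
      simp only [hI, Finset.mem_Icc] at hmem; omega
    rw [hSdef, hI, hN0] at hS1
    simp at hS1
    linarith
  set h : AddCircle (1 : ℝ) → ENNReal := fun y => ∑ m ∈ I, (E m).indicator 1 y with hh
  have hmeas_h : Measurable h :=
    Finset.measurable_sum _ (fun m _ => measurable_const.indicator (hEmeas m))
  set A : Set (AddCircle (1 : ℝ)) := {y | ENNReal.ofReal (S / 2) < h y} with hA
  have hAmeas : MeasurableSet A := measurableSet_lt measurable_const hmeas_h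
  set Q : ENNReal := ∑ m ∈ I, ∑ n ∈ I, volume (E m ∩ E n) with hQdef
  -- first moment
  have hint1 : ∫⁻ y, h y = ENNReal.ofReal S := by
    show ∫⁻ y, ∑ m ∈ I, (E m).indicator 1 y = ENNReal.ofReal S
    rw [lintegral_finset_sum (f := fun m => (E m).indicator 1) _
      (fun m _ => measurable_const.indicator (hEmeas m))]
    rw [hSdef, ENNReal.ofReal_sum_of_nonneg (fun i _ => (hpos i).le)]
    exact Finset.sum_congr rfl fun m _ => by
      rw [lintegral_indicator_one (hEmeas m), hμE m]
  -- second moment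
  have hint2 : ∫⁻ y, (h y) ^ 2 = Q := by
    have hsq : ∀ y : AddCircle (1:ℝ), (h y) ^ 2
        = ∑ m ∈ I, ∑ n ∈ I, (E m ∩ E n).indicator 1 y := by
      intro y
      show (∑ m ∈ I, (E m).indicator 1 y) ^ 2 = _
      rw [sq, Finset.sum_mul_sum]
      refine Finset.sum_congr rfl fun m _ => Finset.sum_congr rfl fun n _ => ?_
      by_cases hm : y ∈ E m <;> by_cases hn : y ∈ E n <;>
        simp [Set.indicator_apply, hm, hn, Set.mem_inter_iff]
    calc ∫⁻ y, (h y) ^ 2 = ∫⁻ y, ∑ m ∈ I, ∑ n ∈ I, (E m ∩ E n).indicator 1 y := by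
          exact lintegral_congr hsq
      _ = Q := by
        rw [lintegral_finset_sum (f := fun m => fun y => ∑ n ∈ I, (E m ∩ E n).indicator 1 y) _
          (fun m _ => Finset.measurable_sum _
            (fun n _ => measurable_const.indicator ((hEmeas m).inter (hEmeas n))))]
        refine Finset.sum_congr rfl fun m _ => ?_
        rw [lintegral_finset_sum (f := fun n => (E m ∩ E n).indicator 1) _
          (fun n _ => measurable_const.indicator ((hEmeas m).inter (hEmeas n)))]
        exact Finset.sum_congr rfl fun n _ => lintegral_indicator_one ((hEmeas m).inter (hEmeas n))
  -- Q bound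
  have hQ : Q ≤ ENNReal.ofReal (S + 4 / c * S * S) := by
    have tri : ∀ m n : ℕ, volume (E m ∩ E n)
        = (if m < n then volume (E m ∩ E n) else 0)
          + ((if m = n then volume (E m ∩ E n) else 0)
          + (if n < m then volume (E m ∩ E n) else 0)) := by
      intro m n
      rcases lt_trichotomy m n with hlt | heq | hgt
      · simp [hlt, hlt.ne, not_lt_of_gt hlt]
      · simp [heq, lt_irrefl]
      · simp [hgt, hgt.ne', not_lt_of_gt hgt]
    have hsplit : Q = (∑ m ∈ I, ∑ n ∈ I, if m < n then volume (E m ∩ E n) else 0)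
        + ((∑ m ∈ I, ∑ n ∈ I, if m = n then volume (E m ∩ E n) else 0)
        + (∑ m ∈ I, ∑ n ∈ I, if n < m then volume (E m ∩ E n) else 0)) := by
      rw [hQdef, ← Finset.sum_add_distrib, ← Finset.sum_add_distrib]
      refine Finset.sum_congr rfl fun m _ => ?_
      rw [← Finset.sum_add_distrib, ← Finset.sum_add_distrib]
      exact Finset.sum_congr rfl fun n _ => tri m n
    have hdiag : (∑ m ∈ I, ∑ n ∈ I, if m = n then volume (E m ∩ E n) else 0)
        = ENNReal.ofReal S := by
      have : ∀ m ∈ I, (∑ n ∈ I, if m = n then volume (E m ∩ E n) else 0)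
          = ENNReal.ofReal (ψ m) := by
        intro m hm
        rw [Finset.sum_ite_eq I m (fun n => volume (E m ∩ E n)), if_pos hm,
          Set.inter_self, hμE m]
      rw [Finset.sum_congr rfl this, hSdef,
        ENNReal.ofReal_sum_of_nonneg (fun i _ => (hpos i).le)]
    have hofsum : ENNReal.ofReal (2 / c * S * S)
        = ∑ n ∈ I, ENNReal.ofReal (2 / c * ψ n * S) := by
      rw [← ENNReal.ofReal_sum_of_nonneg (fun i _ => by
        have := (hpos i).le
        have hS0' := hS0.le
        positivity)]
      congr 1
      rw [hSdef, ← Finset.sum_mul, ← Finset.mul_sum]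
      try ring
    have hover : ∀ n, (∑ m ∈ I.filter (fun m => n < m), volume (E m ∩ E n))
        ≤ ENNReal.ofReal (2 / c * ψ n * S) := by
      intro n
      have := overlap_bound α c hc hbad ψ hpos h6 hanti N n
      rw [hI, hSdef]
      exact this
    have hupper : (∑ m ∈ I, ∑ n ∈ I, if m < n then volume (E m ∩ E n) else 0)
        ≤ ENNReal.ofReal (2 / c * S * S) := by
      rw [hofsum]
      apply Finset.sum_le_sum
      intro m _
      rw [← Finset.sum_filter]
      calc ∑ n ∈ I.filter (fun n => m < n), volume (E m ∩ E n)
          = ∑ n ∈ I.filter (fun n => m < n), volume (E n ∩ E m) :=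
            Finset.sum_congr rfl fun n _ => by rw [Set.inter_comm]
        _ ≤ ENNReal.ofReal (2 / c * ψ m * S) := hover m
    have hlower : (∑ m ∈ I, ∑ n ∈ I, if n < m then volume (E m ∩ E n) else 0)
        ≤ ENNReal.ofReal (2 / c * S * S) := by
      rw [Finset.sum_comm, hofsum]
      apply Finset.sum_le_sum
      intro n _
      rw [← Finset.sum_filter]
      exact hover n
    calc Q ≤ ENNReal.ofReal (2 / c * S * S)
          + (ENNReal.ofReal S + ENNReal.ofReal (2 / c * S * S)) := by
          rw [hsplit]
          exact add_le_add hupper (add_le_add hdiag.le hlower)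
      _ = ENNReal.ofReal (S + 4 / c * S * S) := by
          rw [← ENNReal.ofReal_add (by positivity) (by positivity),
            ← ENNReal.ofReal_add (by positivity) (by positivity)]
          congr 1
          ring
  show ENNReal.ofReal (1 / (4 * (1 + 4 / c))) ≤ volume A
  have hAc : ∫⁻ y in Aᶜ, h y ∂volume ≤ ENNReal.ofReal (S / 2) := by
    have hb : ∀ y ∈ Aᶜ, h y ≤ ENNReal.ofReal (S / 2) := by
      intro y hy
      simp only [hA, Set.mem_compl_iff, Set.mem_setOf_eq, not_lt] at hy
      exact hy
    calc ∫⁻ y in Aᶜ, h y ∂volume ≤ ∫⁻ _ in Aᶜ, ENNReal.ofReal (S / 2) ∂volume :=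
          setLIntegral_mono' hAmeas.compl hb
      _ = ENNReal.ofReal (S / 2) * volume Aᶜ := setLIntegral_const _ _
      _ ≤ ENNReal.ofReal (S / 2) * 1 := by
          apply mul_le_mul_right
          calc volume Aᶜ ≤ volume (Set.univ : Set (AddCircle (1:ℝ))) :=
                measure_mono (Set.subset_univ _)
            _ = 1 := by rw [AddCircle.measure_univ]; simp
      _ = ENNReal.ofReal (S / 2) := mul_one _
  have hsplit2 : ∫⁻ y in A, h y ∂volume + ∫⁻ y in Aᶜ, h y ∂volume = ∫⁻ y, h y :=
    lintegral_add_compl h hAmeas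
  have hlow : ENNReal.ofReal (S / 2) ≤ ∫⁻ y in A, h y ∂volume := by
    have he : ENNReal.ofReal (S/2) + ENNReal.ofReal (S/2) = ENNReal.ofReal S := by
      rw [← ENNReal.ofReal_add (by linarith) (by linarith)]; congr 1; ring
    have h1 : ENNReal.ofReal (S/2) + ENNReal.ofReal (S/2)
        ≤ (∫⁻ y in A, h y ∂volume) + ENNReal.ofReal (S/2) := by
      rw [he, ← hint1, ← hsplit2]
      exact add_le_add le_rfl hAc
    exact (ENNReal.add_le_add_iff_right ENNReal.ofReal_ne_top).mp h1
  have hCS : ∫⁻ y in A, h y ∂volume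
      ≤ (∫⁻ y, (h y) ^ 2) ^ (1/2 : ℝ) * (volume A) ^ (1/2 : ℝ) := by
    set gA : AddCircle (1:ℝ) → ENNReal := A.indicator 1 with hgA
    have hind : ∫⁻ y in A, h y ∂volume = ∫⁻ y, (h * gA) y := by
      rw [← lintegral_indicator hAmeas]
      apply lintegral_congr
      intro y
      by_cases hy : y ∈ A <;>
        simp [hy, hgA, Pi.mul_apply, Set.indicator_of_mem, Set.indicator_of_notMem]
    rw [hind]
    have hconj : (2:ℝ).HolderConjugate 2 := Real.HolderConjugate.two_two
    have hgAmeas : Measurable gA := measurable_const.indicator hAmeas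
    have hq := ENNReal.lintegral_mul_le_Lp_mul_Lq volume hconj hmeas_h.aemeasurable
      hgAmeas.aemeasurable
    have h2r : ∀ x : ENNReal, x ^ (2:ℝ) = x ^ (2:ℕ) := fun x => by
      rw [← ENNReal.rpow_natCast x 2]; norm_num
    calc ∫⁻ y, (h * gA) y
        ≤ (∫⁻ y, h y ^ (2:ℝ)) ^ (1/2:ℝ) * (∫⁻ y, (gA y) ^ (2:ℝ)) ^ (1/2:ℝ) := hq
      _ = (∫⁻ y, (h y) ^ 2) ^ (1/2:ℝ) * (volume A) ^ (1/2:ℝ) := by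
          congr 1
          · congr 1
            apply lintegral_congr
            intro y
            rw [h2r]
          · congr 1
            have hpt2 : ∀ y : AddCircle (1:ℝ), (gA y) ^ (2:ℝ) = gA y := by
              intro y
              by_cases hy : y ∈ A <;> simp [hgA, hy]
            rw [lintegral_congr hpt2]
            show ∫⁻ y, A.indicator 1 y = volume A
            rw [lintegral_indicator_one hAmeas]
  have hsq2 : ENNReal.ofReal (S/2) ^ 2 ≤ Q * volume A := by
    have hcb := hlow.trans hCS
    rw [hint2] at hcb
    calc ENNReal.ofReal (S/2) ^ 2 ≤ (Q ^ (1/2:ℝ) * (volume A) ^ (1/2:ℝ)) ^ 2 :=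
          pow_le_pow_left₀ zero_le hcb 2
      _ = Q * volume A := by
          rw [mul_pow, ← ENNReal.rpow_natCast (Q ^ (1/2:ℝ)) 2,
            ← ENNReal.rpow_natCast ((volume A) ^ (1/2:ℝ)) 2,
            ← ENNReal.rpow_mul, ← ENNReal.rpow_mul]
          norm_num
  have hQ0 : Q ≠ 0 := by
    have h1le : ENNReal.ofReal (ψ 1) ≤ Q := by
      rw [hQdef]
      calc ENNReal.ofReal (ψ 1) = volume (E 1 ∩ E 1) := by rw [Set.inter_self, hμE 1]
        _ ≤ ∑ n ∈ I, volume (E 1 ∩ E n) :=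
            Finset.single_le_sum (f := fun n => volume (E 1 ∩ E n))
              (fun i _ => zero_le) hN1
        _ ≤ ∑ m ∈ I, ∑ n ∈ I, volume (E m ∩ E n) :=
            Finset.single_le_sum (f := fun m => ∑ n ∈ I, volume (E m ∩ E n))
              (fun i _ => zero_le) hN1
    intro hQ0'
    rw [hQ0', le_zero_iff] at h1le
    exact (ENNReal.ofReal_pos.mpr (hpos 1)).ne' h1le
  have hQtop : Q ≠ ⊤ := (lt_of_le_of_lt hQ ENNReal.ofReal_lt_top).ne
  have hγQ : ENNReal.ofReal (1/(4*(1+4/c))) * Q ≤ ENNReal.ofReal (S/2) ^ 2 := by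
    have hc4 : (0:ℝ) < 1 + 4/c := by positivity
    calc ENNReal.ofReal (1/(4*(1+4/c))) * Q
        ≤ ENNReal.ofReal (1/(4*(1+4/c))) * ENNReal.ofReal ((1 + 4/c) * S * S) := by
          apply mul_le_mul_right
          refine hQ.trans (ENNReal.ofReal_le_ofReal ?_)
          have h4c : (0:ℝ) ≤ 4 / c := by positivity
          nlinarith
      _ = ENNReal.ofReal ((1/(4*(1+4/c))) * ((1+4/c) * S * S)) :=
          (ENNReal.ofReal_mul (by positivity)).symm
      _ = ENNReal.ofReal ((S/2) * (S/2)) := by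
          congr 1
          field_simp
          ring
      _ = ENNReal.ofReal (S/2) ^ 2 := by rw [sq, ENNReal.ofReal_mul (by linarith)]
  have hfin2 : ENNReal.ofReal (1/(4*(1+4/c))) * Q ≤ volume A * Q :=
    hγQ.trans (hsq2.trans_eq (mul_comm Q (volume A)))
  exact (ENNReal.mul_le_mul_iff_left hQ0 hQtop).mp hfin2

private lemma kurzweil_core (α c : ℝ) (hc : 0 < c)
    (hbad : ∀ k : ℕ, 0 < k → c / k < ‖(((k : ℝ) * α : ℝ) : AddCircle (1 : ℝ))‖)
    (ψ : ℕ → ℝ) (hpos : ∀ n, 0 < ψ n) (h6 : ∀ n, ψ n ≤ 1 / 6)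
    (hanti : Antitone ψ) (hdiv : ¬ Summable ψ) :
    volume {y : AddCircle (1 : ℝ) |
      ¬ {m : ℕ | 0 < m ∧
          y ∈ closedBall ((((m : ℝ) + 1) * α : ℝ) : AddCircle (1 : ℝ)) (ψ m / 2)}.Infinite}
      = 0 := by
  classical
  set E : ℕ → Set (AddCircle (1 : ℝ)) :=
    fun m : ℕ => closedBall ((((m : ℝ) + 1) * α : ℝ) : AddCircle (1 : ℝ)) (ψ m / 2) with hE
  have hEmeas : ∀ m, MeasurableSet (E m) := fun m => measurableSet_closedBall
  set SS : ℕ → ℝ := fun N => ∑ i ∈ Finset.Icc 1 N, ψ i with hSS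
  have hSS0 : ∀ N, 0 ≤ SS N := fun N => Finset.sum_nonneg fun i _ => (hpos i).le
  have hSStop : Tendsto SS atTop atTop := by
    have h := (not_summable_iff_tendsto_nat_atTop_of_nonneg (fun i => (hpos i).le)).mp hdiv
    have h2 : Tendsto (fun N : ℕ => ∑ i ∈ Finset.range (N + 1), ψ i) atTop atTop :=
      h.comp (tendsto_add_atTop_nat 1)
    have h3 : SS = fun N : ℕ => (∑ i ∈ Finset.range (N + 1), ψ i) + (- ψ 0) := by
      funext N
      have : Finset.range (N + 1) = insert 0 (Finset.Icc 1 N) := by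
        ext i; simp only [Finset.mem_range, Finset.mem_insert, Finset.mem_Icc]; omega
      rw [hSS, this, Finset.sum_insert (by simp)]
      ring
    rw [h3]
    exact tendsto_atTop_add_const_right atTop _ h2
  set γ : ENNReal := ENNReal.ofReal (1 / (4 * (1 + 4 / c))) with hγ
  have hγpos : 0 < γ := ENNReal.ofReal_pos.mpr (by positivity)
  set A : ℕ → Set (AddCircle (1 : ℝ)) :=
    fun N => {y | ENNReal.ofReal (SS N / 2) < ∑ m ∈ Finset.Icc 1 N, (E m).indicator 1 y}
    with hA
  have hAmeas : ∀ N, MeasurableSet (A N) := fun N =>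
    measurableSet_lt measurable_const
      (Finset.measurable_sum _ (fun m _ => measurable_const.indicator (hEmeas m)))
  have hγA : ∀ N : ℕ, 1 ≤ SS N → γ ≤ volume (A N) := by
    intro N hSN
    exact pz_bound α c hc hbad ψ hpos h6 hanti N hSN
  set s : Set (AddCircle (1 : ℝ)) := {y | {m : ℕ | 0 < m ∧ y ∈ E m}.Infinite} with hs
  have hsmeas : MeasurableSet s := by
    have : s = ⋂ N : ℕ, ⋃ m : ℕ, ⋃ _ : N ≤ m ∧ 0 < m, E m := by
      ext y
      simp only [hs, Set.mem_setOf_eq, Set.mem_iInter, Set.mem_iUnion]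
      rw [infinite_setOf_iff]
      constructor
      · intro h N; obtain ⟨n, hn, h1, h2⟩ := h N; exact ⟨n, ⟨hn, h1⟩, h2⟩
      · intro h N; obtain ⟨n, ⟨hn, h1⟩, h2⟩ := h N; exact ⟨n, hn, h1, h2⟩
    rw [this]
    exact MeasurableSet.iInter fun N => MeasurableSet.iUnion fun m =>
      MeasurableSet.iUnion fun _ => hEmeas m
  -- positive measure of s
  have hμs : γ ≤ volume s := by
    obtain ⟨n₀, hn₀⟩ := Filter.eventually_atTop.mp (hSStop.eventually_ge_atTop 1)
    set W : ℕ → Set (AddCircle (1 : ℝ)) := fun n => ⋃ k : ℕ, A (n₀ + n + k) with hW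
    have hWmeas : ∀ n, MeasurableSet (W n) := fun n =>
      MeasurableSet.iUnion fun k => hAmeas _
    have hWanti : Antitone W := by
      apply antitone_nat_of_succ_le
      intro n
      apply Set.iUnion_subset
      intro k
      rw [show n₀ + (n + 1) + k = n₀ + n + (k + 1) from by omega]
      exact Set.subset_iUnion (fun k => A (n₀ + n + k)) (k + 1)
    have hWγ : ∀ n, γ ≤ volume (W n) := by
      intro n
      refine le_trans (hγA (n₀ + n + 0) (hn₀ _ (by omega))) (measure_mono ?_)
      exact Set.subset_iUnion (fun k => A (n₀ + n + k)) 0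
    have hiInf : γ ≤ volume (⋂ n, W n) := by
      rw [Directed.measure_iInter (fun n => (hWmeas n).nullMeasurableSet)
        hWanti.directed_ge ⟨0, measure_ne_top _ _⟩]
      exact le_iInf hWγ
    refine le_trans hiInf (measure_mono ?_)
    intro y hy
    show {m : ℕ | 0 < m ∧ y ∈ E m}.Infinite
    rw [infinite_setOf_iff]
    intro M
    obtain ⟨N₁, hN₁⟩ := Filter.eventually_atTop.mp (hSStop.eventually_ge_atTop (2 * ((M:ℝ) + 1)))
    have hy1 := Set.mem_iInter.mp hy N₁
    obtain ⟨k, hk⟩ := Set.mem_iUnion.mp hy1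
    set Nn := n₀ + N₁ + k with hNn
    have hSN : 2 * ((M:ℝ) + 1) ≤ SS Nn := hN₁ Nn (by omega)
    have hk' : ENNReal.ofReal (SS Nn / 2)
        < ∑ m ∈ Finset.Icc 1 Nn, (E m).indicator 1 y := hk
    have hsum : (∑ m ∈ Finset.Icc 1 Nn, (E m).indicator (1 : AddCircle (1:ℝ) → ENNReal) y)
        = (((Finset.Icc 1 Nn).filter (fun m => y ∈ E m)).card : ENNReal) := by
      have heq : ∀ m ∈ Finset.Icc 1 Nn,
          (E m).indicator (1 : AddCircle (1:ℝ) → ENNReal) y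
            = if y ∈ E m then 1 else 0 := by
        intro m _
        by_cases hy2 : y ∈ E m <;> simp [hy2]
      rw [Finset.sum_congr rfl heq, Finset.sum_boole]
    rw [hsum] at hk'
    have hMcast : ENNReal.ofReal ((M:ℝ) + 1) = ((M + 1 : ℕ) : ENNReal) := by
      rw [show ((M:ℝ) + 1) = ((M + 1 : ℕ) : ℝ) from by push_cast; ring,
        ENNReal.ofReal_natCast]
    have hlt : ((M + 1 : ℕ) : ENNReal)
        < (((Finset.Icc 1 Nn).filter (fun m => y ∈ E m)).card : ENNReal) := by
      calc ((M + 1 : ℕ) : ENNReal) = ENNReal.ofReal ((M:ℝ) + 1) := hMcast.symm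
        _ ≤ ENNReal.ofReal (SS Nn / 2) := ENNReal.ofReal_le_ofReal (by linarith)
        _ < _ := hk'
    have hcard : M + 1 ≤ ((Finset.Icc 1 Nn).filter (fun m => y ∈ E m)).card := by
      exact_mod_cast hlt.le
    by_contra hcon
    push_neg at hcon
    have hsubf : (Finset.Icc 1 Nn).filter (fun m => y ∈ E m) ⊆ Finset.Icc 1 M := by
      intro m hm
      simp only [Finset.mem_filter, Finset.mem_Icc] at hm ⊢
      refine ⟨hm.1.1, ?_⟩
      by_contra hM
      push_neg at hM
      exact hcon m (by omega) (by omega) hm.2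
    have hfc := Finset.card_le_card hsubf
    rw [Nat.card_Icc] at hfc
    omega
  -- ergodicity
  have hirr : ∀ p q : ℤ, q ≠ 0 → (q : ℝ) * α ≠ (p : ℝ) := by
    intro p q hq0 heq
    have key : ∀ j : ℤ, ∀ k : ℕ, 0 < k → ((k : ℝ) * α) ≠ (j : ℝ) := by
      intro j k hk habs
      have h1 := hbad k hk
      rw [habs, AddCircle.norm_eq] at h1
      simp only [inv_one, one_mul, mul_one, round_intCast, sub_self, abs_zero] at h1
      have : (0:ℝ) < c / k := by positivity
      linarith
    rcases Int.natAbs_eq q with h | h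
    · apply key p q.natAbs (by omega)
      have h1 : ((q.natAbs : ℕ) : ℝ) = (q : ℝ) := by
        have := congrArg (fun z : ℤ => (z : ℝ)) h; push_cast at this
        rw [Nat.cast_natAbs]; push_cast; linarith
      rw [h1, heq]
    · apply key (-p) q.natAbs (by omega)
      have h1 : ((q.natAbs : ℕ) : ℝ) = -(q : ℝ) := by
        have := congrArg (fun z : ℤ => (z : ℝ)) h; push_cast at this
        rw [Nat.cast_natAbs]; push_cast; linarith
      rw [h1]
      push_cast
      rw [neg_mul, heq]
  have herg : Ergodic (fun y => ((α : ℝ) : AddCircle (1 : ℝ)) + y) volume :=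
    ergodic_add_left_of_denseRange_zsmul (denseRange_zsmul_coe α hirr) volume
  have hpre : (fun y => ((α : ℝ) : AddCircle (1 : ℝ)) + y) ⁻¹' s ⊆ s := by
    intro y hy
    simp only [hs, Set.mem_preimage, Set.mem_setOf_eq] at hy ⊢
    have key : ∀ m : ℕ, 2 ≤ m → ((α : ℝ) : AddCircle (1 : ℝ)) + y ∈ E m → y ∈ E (m - 1) := by
      intro m hm hmem
      rw [hE] at hmem ⊢
      simp only [mem_closedBall] at hmem ⊢
      have hcast : (((m - 1 : ℕ) : ℝ) + 1) = (m : ℝ) := by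
        have h1 : (1:ℕ) ≤ m := by omega
        push_cast [Nat.cast_sub h1]; ring
      rw [hcast]
      have hshift : dist y ((((m : ℝ)) * α : ℝ) : AddCircle (1 : ℝ))
          = dist (((α : ℝ) : AddCircle (1 : ℝ)) + y)
              ((((m : ℝ) + 1) * α : ℝ) : AddCircle (1 : ℝ)) := by
        rw [← dist_add_left ((α : ℝ) : AddCircle (1 : ℝ))]
        congr 1
        rw [← QuotientAddGroup.mk_add]
        congr 1
        ring
      rw [hshift]
      exact hmem.trans (by have := hanti (Nat.sub_le m 1); linarith)
    have hinf : ({m : ℕ | 0 < m ∧ ((α : ℝ) : AddCircle (1 : ℝ)) + y ∈ E m} \ {1}).Infinite :=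
      hy.diff (Set.finite_singleton 1)
    have hsub : (fun m => m - 1) ''
        ({m : ℕ | 0 < m ∧ ((α : ℝ) : AddCircle (1 : ℝ)) + y ∈ E m} \ {1})
        ⊆ {m : ℕ | 0 < m ∧ y ∈ E m} := by
      rintro - ⟨m, ⟨⟨hm0, hmE⟩, hm1⟩, rfl⟩
      have hm2 : 2 ≤ m := by
        simp only [Set.mem_singleton_iff] at hm1; omega
      show 0 < m - 1 ∧ y ∈ E (m - 1)
      exact ⟨by omega, key m hm2 hmE⟩
    apply Set.Infinite.mono hsub
    apply Set.Infinite.image _ hinf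
    intro a ha b hb hab
    simp only [Set.mem_diff, Set.mem_setOf_eq, Set.mem_singleton_iff] at ha hb
    have hab' : a - 1 = b - 1 := hab
    have h1 : 0 < a := ha.1.1
    have h2 : 0 < b := hb.1.1
    omega
  rcases herg.ae_empty_or_univ_of_preimage_ae_le hsmeas.nullMeasurableSet
      (HasSubset.Subset.eventuallyLE hpre) with h | h
  · exfalso
    have : volume s = 0 := ae_eq_empty.mp h
    rw [this] at hμs
    exact hγpos.ne' (le_antisymm hμs zero_le)
  · have : volume sᶜ = 0 := ae_eq_univ.mp h
    rw [hs, Set.compl_setOf] at this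
    exact this

/-- Let `θ ∈ (0, π)` be such that `θ/(2π)` is badly approximable, i.e. there
exists `c > 0` with `‖n·θ/(2π)‖ > c/n` for all positive integers `n` (distance to a nearest
integer), and let `φ : ℕ → (0, ∞)` be decreasing with `∑ φ(n) = ∞`. Then for Lebesgue-almost
every `x ∈ (−1/sin θ, 1/sin θ)` there are infinitely many positive integers `m` with
`|sin((m+1)θ)/sin θ − x| < (2π/sin θ)·φ(m)`. -/
theorem statement8 (θ : ℝ) (hθ : θ ∈ Set.Ioo 0 π) (c : ℝ) (hc : 0 < c)
    (hbad : ∀ n : ℕ, 0 < n →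
      c / n < |(n : ℝ) * (θ / (2 * π)) - round ((n : ℝ) * (θ / (2 * π)))|)
    (φ : ℕ → ℝ) (hφpos : ∀ n, 0 < φ n) (hφmono : Antitone φ) (hφdiv : ¬ Summable φ) :
    ∀ᵐ x ∂(MeasureTheory.volume.restrict (Set.Ioo (-(1 / Real.sin θ)) (1 / Real.sin θ))),
      {m : ℕ | 0 < m ∧
        |Real.sin ((m + 1) * θ) / Real.sin θ - x| < (2 * π / Real.sin θ) * φ m}.Infinite := by
  classical
  obtain ⟨hθ0, hθπ⟩ := hθ
  have hπ : 0 < π := Real.pi_pos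
  have hsθ : 0 < Real.sin θ := Real.sin_pos_of_pos_of_lt_pi hθ0 hθπ
  set α : ℝ := θ / (2 * π) with hα
  have h2πα : 2 * π * α = θ := by
    rw [hα]; field_simp
  set ψ : ℕ → ℝ := fun m => min (φ m) (1 / 6) with hψ
  have hψpos : ∀ n, 0 < ψ n := fun n => lt_min (hφpos n) (by norm_num)
  have hψ6 : ∀ n, ψ n ≤ 1 / 6 := fun n => min_le_right _ _
  have hψφ : ∀ n, ψ n ≤ φ n := fun n => min_le_left _ _
  have hψanti : Antitone ψ := fun i j hij => min_le_min (hφmono hij) le_rfl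
  have hψdiv : ¬ Summable ψ := by
    intro hsum
    apply hφdiv
    by_cases hcase : ∃ m₀, φ m₀ ≤ 1 / 6
    · obtain ⟨m₀, hm₀⟩ := hcase
      have heq : ∀ n, ψ (n + m₀) = φ (n + m₀) := by
        intro n
        rw [hψ]
        exact min_eq_left ((hφmono (Nat.le_add_left m₀ n)).trans hm₀)
      have h1 : Summable (fun n => ψ (n + m₀)) := (summable_nat_add_iff m₀).mpr hsum
      rw [funext heq] at h1
      exact (summable_nat_add_iff m₀).mp h1
    · push_neg at hcase
      exfalso
      have heq : ψ = fun _ => (1 : ℝ) / 6 := by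
        funext n
        exact min_eq_right (hcase n).le
      rw [heq] at hsum
      have := hsum.tendsto_atTop_zero
      have h6 := tendsto_nhds_unique this tendsto_const_nhds
      norm_num at h6
  have hbad' : ∀ k : ℕ, 0 < k → c / k < ‖(((k : ℝ) * α : ℝ) : AddCircle (1 : ℝ))‖ := by
    intro k hk
    rw [AddCircle.norm_eq]
    simpa [inv_one, one_mul, mul_one] using hbad k hk
  have hcore := kurzweil_core α c hc hbad' ψ hψpos hψ6 hψanti hψdiv
  set Bad : Set (AddCircle (1 : ℝ)) := {y : AddCircle (1 : ℝ) |
      ¬ {m : ℕ | 0 < m ∧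
          y ∈ closedBall ((((m : ℝ) + 1) * α : ℝ) : AddCircle (1 : ℝ)) (ψ m / 2)}.Infinite}
    with hBad
  set BadR : Set ℝ := (fun t : ℝ => ((t : ℝ) : AddCircle (1 : ℝ))) ⁻¹' Bad with hBadR
  have hBRnull : volume BadR = 0 := by
    have hBR : ∀ k : ℤ, volume (BadR ∩ Set.Ioc (k : ℝ) ((k : ℝ) + 1)) = 0 := by
      intro k
      have hmp := AddCircle.measurePreserving_mk (1 : ℝ) (k : ℝ)
      have h1 := hmp.measure_preimage (NullMeasurableSet.of_null hcore)
      rw [Measure.restrict_apply' measurableSet_Ioc, hcore] at h1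
      exact h1
    have hcover : BadR ⊆ ⋃ k : ℤ, BadR ∩ Set.Ioc (k : ℝ) ((k : ℝ) + 1) := by
      intro t ht
      refine Set.mem_iUnion.mpr ⟨⌈t⌉ - 1, ht, ?_, ?_⟩
      · push_cast
        have := Int.ceil_lt_add_one t
        linarith
      · push_cast
        have := Int.le_ceil t
        linarith
    exact measure_mono_null hcover (measure_iUnion_null fun k => hBR k)
  set g : ℝ → ℝ := fun t => Real.sin (2 * π * t) / Real.sin θ with hg
  have hgL : LipschitzWith (Real.toNNReal (2 * π / Real.sin θ)) g := by
    apply LipschitzWith.of_dist_le_mul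
    intro t t'
    rw [Real.dist_eq, Real.dist_eq]
    have h1 : g t - g t' = (Real.sin (2 * π * t) - Real.sin (2 * π * t')) / Real.sin θ := by
      rw [hg]; ring
    rw [h1, abs_div, abs_of_pos hsθ,
      Real.coe_toNNReal _ (by positivity : (0:ℝ) ≤ 2 * π / Real.sin θ)]
    calc |Real.sin (2 * π * t) - Real.sin (2 * π * t')| / Real.sin θ
        ≤ |2 * π * t - 2 * π * t'| / Real.sin θ := by
          have := _root_.abs_sin_sub_sin_le (2 * π * t) (2 * π * t')
          apply div_le_div_of_nonneg_right this hsθ.le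
      _ = 2 * π / Real.sin θ * |t - t'| := by
          rw [show 2 * π * t - 2 * π * t' = (2 * π) * (t - t') from by ring, abs_mul,
            abs_of_pos (by positivity : (0:ℝ) < 2 * π)]
          ring
  have hZ : volume (g '' BadR) = 0 := by
    have h1 := hgL.hausdorffMeasure_image_le (zero_le_one) BadR
    rw [MeasureTheory.hausdorffMeasure_real] at h1
    rw [hBRnull] at h1
    simpa using h1
  have hae1 : ∀ᵐ x : ℝ ∂volume, x ∉ g '' BadR := measure_eq_zero_iff_ae_notMem.mp hZ
  have hae2 := ae_restrict_of_ae
    (μ := volume) (s := Set.Ioo (-(1 / Real.sin θ)) (1 / Real.sin θ)) hae1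
  have hae3 := ae_restrict_mem
    (μ := volume) (measurableSet_Ioo (a := -(1 / Real.sin θ)) (b := 1 / Real.sin θ))
  filter_upwards [hae2, hae3] with x hxZ hxI
  obtain ⟨hx1, hx2⟩ := hxI
  have hinv : (1 / Real.sin θ) * Real.sin θ = 1 := by field_simp
  have hxs1 : -1 ≤ x * Real.sin θ := by nlinarith
  have hxs2 : x * Real.sin θ ≤ 1 := by nlinarith
  set u : ℝ := Real.arcsin (x * Real.sin θ) with hu
  set t : ℝ := u / (2 * π) with ht
  have harg0 : 2 * π * t = u := by rw [ht]; field_simp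
  have hgt : g t = x := by
    show Real.sin (2 * π * t) / Real.sin θ = x
    rw [harg0, hu, Real.sin_arcsin hxs1 hxs2]
    field_simp
  have hts : ((t : ℝ) : AddCircle (1 : ℝ)) ∉ Bad := fun hmem => hxZ ⟨t, hmem, hgt⟩
  have hM : {m : ℕ | 0 < m ∧
      ((t : ℝ) : AddCircle (1 : ℝ))
        ∈ closedBall ((((m : ℝ) + 1) * α : ℝ) : AddCircle (1 : ℝ)) (ψ m / 2)}.Infinite := by
    by_contra hcon
    exact hts hcon
  refine Set.Infinite.mono ?_ hM
  rintro m ⟨hm0, hmB⟩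
  refine ⟨hm0, ?_⟩
  -- extract the distance information
  rw [mem_closedBall] at hmB
  set w : ℝ := t - ((m : ℝ) + 1) * α with hw
  have hdist : |w - round w| ≤ ψ m / 2 := by
    have h1 : dist ((t : ℝ) : AddCircle (1 : ℝ)) ((((m : ℝ) + 1) * α : ℝ) : AddCircle (1 : ℝ))
        = ‖((w : ℝ) : AddCircle (1 : ℝ))‖ := by
      rw [dist_eq_norm, ← QuotientAddGroup.mk_sub, hw]
    rw [h1, AddCircle.norm_eq] at hmB
    simpa [inv_one, one_mul, mul_one] using hmB
  set δ : ℝ := w - round w with hδ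
  have hsin : Real.sin (2 * π * t) = Real.sin (((m : ℝ) + 1) * θ + 2 * π * δ) := by
    have harg : 2 * π * t = ((m : ℝ) + 1) * θ + 2 * π * δ + (round w : ℝ) * (2 * π) := by
      rw [hδ, hw, ← h2πα]
      ring
    rw [harg, Real.sin_add_int_mul_two_pi]
  have h1 : |Real.sin (((m : ℝ) + 1) * θ + 2 * π * δ) - Real.sin (((m : ℝ) + 1) * θ)|
      ≤ 2 * π * |δ| := by
    calc |Real.sin (((m : ℝ) + 1) * θ + 2 * π * δ) - Real.sin (((m : ℝ) + 1) * θ)|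
        ≤ |(((m : ℝ) + 1) * θ + 2 * π * δ) - ((m : ℝ) + 1) * θ| := _root_.abs_sin_sub_sin_le _ _
      _ = 2 * π * |δ| := by
          rw [show (((m : ℝ) + 1) * θ + 2 * π * δ) - ((m : ℝ) + 1) * θ = (2 * π) * δ from by ring,
            abs_mul, abs_of_pos (by positivity : (0:ℝ) < 2 * π)]
  show |Real.sin (((m : ℝ) + 1) * θ) / Real.sin θ - x| < 2 * π / Real.sin θ * φ m
  rw [← hgt]
  show |Real.sin (((m : ℝ) + 1) * θ) / Real.sin θ - Real.sin (2 * π * t) / Real.sin θ|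
      < 2 * π / Real.sin θ * φ m
  rw [div_sub_div_same, abs_div, abs_of_pos hsθ, hsin]
  rw [div_lt_iff₀ hsθ]
  have hfin : 2 * π / Real.sin θ * φ m * Real.sin θ = 2 * π * φ m := by field_simp
  rw [hfin]
  have h2 : |δ| ≤ ψ m / 2 := hdist
  have h3 : ψ m ≤ φ m := hψφ m
  have h4 : 0 < φ m := hφpos m
  calc |Real.sin (((m : ℝ) + 1) * θ) - Real.sin (((m : ℝ) + 1) * θ + 2 * π * δ)|
      = |Real.sin (((m : ℝ) + 1) * θ + 2 * π * δ) - Real.sin (((m : ℝ) + 1) * θ)| :=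
        abs_sub_comm _ _
    _ ≤ 2 * π * |δ| := h1
    _ < 2 * π * φ m := by nlinarith
end

section
/- Let θ ∈ (0, π), let δ ∈ (0, 1/8), and let γ ∈ (0, 1/4) be such that for every positive integer m the three inequalities ‖(m+1)·θ/(2π) − δ‖ > γ/(m+1), ‖(m+1)·θ/(2π) − 1/2 + δ‖ > γ/(m+1), and ‖(m+1)·θ/(2π) + 1/2 + δ‖ > γ/(m+1) hold. Then for every positive integer m, |sin((m+1)θ) − sin(2πδ)| > (2γ²π²/(m+1)²)·(1 − γ²π²/(6(m+1)²))². -/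
open Real

lemma my_sub_cube_le_sin {x : ℝ} (hx : 0 ≤ x) : x - x ^ 3 / 6 ≤ Real.sin x := by
  have key : ∀ t : ℝ, HasDerivAt (fun t => Real.sin t - t + t ^ 3 / 6)
      (Real.cos t - 1 + t ^ 2 / 2) t := by
    intro t
    have h := ((Real.hasDerivAt_sin t).sub (hasDerivAt_id t)).add
      ((hasDerivAt_pow 3 t).div_const 6)
    refine h.congr_deriv ?_
    norm_num
    ring
  have hdiff : Differentiable ℝ (fun t => Real.sin t - t + t ^ 3 / 6) :=
    fun t => (key t).differentiableAt
  have mono : Monotone (fun t => Real.sin t - t + t ^ 3 / 6) := by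
    apply monotone_of_deriv_nonneg hdiff
    intro t
    rw [(key t).deriv]
    have := Real.one_sub_sq_div_two_le_cos (x := t)
    linarith
  have h0 := mono hx
  simp only [Real.sin_zero] at h0
  norm_num at h0
  linarith

lemma my_abs_sin_pi_mul (y : ℝ) : |Real.sin (π * y)| = Real.sin (π * |y - round y|) := by
  have h : Real.sin (π * y) = (-1) ^ (round y) * Real.sin (π * (y - round y)) := by
    rw [← Real.sin_add_int_mul_pi]
    ring_nf
  have hb := abs_sub_round y
  have hπ := Real.pi_pos
  rw [h, abs_mul]
  have hone : |((-1 : ℝ)) ^ (round y)| = 1 := by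
    rcases Int.even_or_odd (round y) with he | he
    · rw [he.neg_one_zpow, abs_one]
    · rw [he.neg_one_zpow, abs_neg, abs_one]
  rw [hone, one_mul]
  rcases le_or_gt 0 (y - round y) with hc | hc
  · rw [abs_of_nonneg hc, abs_of_nonneg]
    apply Real.sin_nonneg_of_nonneg_of_le_pi (by positivity)
    rw [abs_of_nonneg hc] at hb
    nlinarith
  · rw [abs_of_neg hc, abs_of_nonpos, mul_neg, Real.sin_neg]
    apply Real.sin_nonpos_of_nonpos_of_neg_pi_le
    · nlinarith
    · rw [abs_of_neg hc] at hb
      nlinarith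

set_option maxHeartbeats 1000000 in
/-- Let `θ ∈ (0, π)`, `δ ∈ (0, 1/8)`, and `γ ∈ (0, 1/4)` be such that for every
positive integer `m` the three inequalities `‖(m+1)·θ/(2π) − δ‖ > γ/(m+1)`,
`‖(m+1)·θ/(2π) − 1/2 + δ‖ > γ/(m+1)`, and `‖(m+1)·θ/(2π) + 1/2 + δ‖ > γ/(m+1)` hold (with
`‖·‖` the distance to a nearest integer). Then for every positive integer `m`,
`|sin((m+1)θ) − sin(2πδ)| > (2γ²π²/(m+1)²)·(1 − γ²π²/(6(m+1)²))²`. -/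
theorem statement9 (θ δ γ : ℝ) (hθ : θ ∈ Set.Ioo 0 π) (hδ : δ ∈ Set.Ioo 0 (1 / 8))
    (hγ : γ ∈ Set.Ioo 0 (1 / 4))
    (h1 : ∀ m : ℕ, 0 < m → γ / (m + 1) <
      |((m + 1 : ℝ) * (θ / (2 * π)) - δ) - round ((m + 1 : ℝ) * (θ / (2 * π)) - δ)|)
    (h2 : ∀ m : ℕ, 0 < m → γ / (m + 1) <
      |((m + 1 : ℝ) * (θ / (2 * π)) - 1 / 2 + δ) -
        round ((m + 1 : ℝ) * (θ / (2 * π)) - 1 / 2 + δ)|)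
    (h3 : ∀ m : ℕ, 0 < m → γ / (m + 1) <
      |((m + 1 : ℝ) * (θ / (2 * π)) + 1 / 2 + δ) -
        round ((m + 1 : ℝ) * (θ / (2 * π)) + 1 / 2 + δ)|) :
    ∀ m : ℕ, 0 < m →
      2 * γ ^ 2 * π ^ 2 / (m + 1 : ℝ) ^ 2 * (1 - γ ^ 2 * π ^ 2 / (6 * (m + 1 : ℝ) ^ 2)) ^ 2
        < |Real.sin ((m + 1) * θ) - Real.sin (2 * π * δ)| := by
  intro m hm
  have hπ := Real.pi_pos
  have hπ' := Real.pi_lt_d2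
  set n : ℝ := (m : ℝ) + 1 with hn
  have hn2 : (2 : ℝ) ≤ n := by
    have : (1 : ℝ) ≤ (m : ℝ) := by exact_mod_cast hm
    simp [hn]; linarith
  have hn0 : n ≠ 0 := by linarith
  set x : ℝ := n * (θ / (2 * π)) with hx
  -- product formula
  have key : Real.sin ((m + 1) * θ) - Real.sin (2 * π * δ)
      = 2 * Real.sin (π * (x - δ)) * Real.sin (π * (x + 1 / 2 + δ)) := by
    rw [Real.sin_sub_sin]
    have e1 : ((m + 1 : ℝ) * θ - 2 * π * δ) / 2 = π * (x - δ) := by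
      rw [hx, hn]; field_simp
    have e2 : Real.cos (((m + 1 : ℝ) * θ + 2 * π * δ) / 2)
        = Real.sin (π * (x + 1 / 2 + δ)) := by
      rw [← Real.sin_add_pi_div_two]
      congr 1
      rw [hx, hn]; field_simp; ring
    rw [e1, e2]
  set d1 : ℝ := |(x - δ) - round (x - δ)| with hd1
  set d2 : ℝ := |(x + 1 / 2 + δ) - round (x + 1 / 2 + δ)| with hd2
  have hD1 : γ / n < d1 := h1 m hm
  have hD2 : γ / n < d2 := h3 m hm
  have hd1half : d1 ≤ 1 / 2 := abs_sub_round _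
  have hd2half : d2 ≤ 1 / 2 := abs_sub_round _
  set z : ℝ := π * (γ / n) with hz
  have hγn : 0 < γ / n := by
    apply div_pos hγ.1; linarith
  have hz0 : 0 < z := by positivity
  have hγn8 : γ / n < 1 / 8 := by
    rw [div_lt_iff₀ (by linarith : (0:ℝ) < n)]
    nlinarith [hγ.2]
  have hz1 : z < 1 / 2 := by nlinarith [hγn8, hπ, hπ']
  have hzpi : z ≤ π / 2 := by nlinarith [hγn8, hπ]
  have hpd1a : 0 ≤ π * d1 := by positivity
  have hpd1b : π * d1 ≤ π / 2 := by nlinarith [hd1half, hπ]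
  have hpd2a : 0 ≤ π * d2 := by positivity
  have hpd2b : π * d2 ≤ π / 2 := by nlinarith [hd2half, hπ]
  have hzd1 : z < π * d1 := by
    rw [hz]; exact (mul_lt_mul_iff_right₀ hπ).2 hD1
  have hzd2 : z < π * d2 := by
    rw [hz]; exact (mul_lt_mul_iff_right₀ hπ).2 hD2
  -- monotonicity
  have hmono := Real.strictMonoOn_sin
  have hs1 : Real.sin z < Real.sin (π * d1) :=
    hmono ⟨by linarith, by linarith⟩ ⟨by linarith, by linarith⟩ hzd1
  have hs2 : Real.sin z < Real.sin (π * d2) :=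
    hmono ⟨by linarith, by linarith⟩ ⟨by linarith, by linarith⟩ hzd2
  have hlow : z - z ^ 3 / 6 ≤ Real.sin z := my_sub_cube_le_sin hz0.le
  have hzsq : z ^ 2 < 1 / 4 := by nlinarith [hz0, hz1]
  have hpos : 0 < z - z ^ 3 / 6 := by nlinarith [mul_lt_mul_of_pos_left hzsq hz0, hz0]
  -- rewrite target
  have htarget : 2 * γ ^ 2 * π ^ 2 / n ^ 2 * (1 - γ ^ 2 * π ^ 2 / (6 * n ^ 2)) ^ 2
      = 2 * (z - z ^ 3 / 6) ^ 2 := by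
    rw [hz]; field_simp
  rw [key, htarget]
  have habs : |2 * Real.sin (π * (x - δ)) * Real.sin (π * (x + 1 / 2 + δ))|
      = 2 * Real.sin (π * d1) * Real.sin (π * d2) := by
    rw [abs_mul, abs_mul, abs_two, my_abs_sin_pi_mul, my_abs_sin_pi_mul]
  rw [habs]
  have q1 : z - z ^ 3 / 6 < Real.sin (π * d1) := lt_of_le_of_lt hlow hs1
  have q2 : z - z ^ 3 / 6 < Real.sin (π * d2) := lt_of_le_of_lt hlow hs2
  nlinarith [q1, q2, hpos]
end

section
/- For a real number α, define Bad^∨_α = {x ∈ ℝ : inf_{m≥1} m·‖m·α − x‖ > 0}. Let θ ∈ (0, π) and let δ ∈ (0, 1/8) be such that δ ∈ Bad^∨_{θ/(2π)}, 1/2 − δ ∈ Bad^∨_{θ/(2π)}, and −1/2 − δ ∈ Bad^∨_{θ/(2π)}. Then there exists a constant c > 0 such that |sin((m+1)θ)/sin θ − sin(2πδ)/sin θ| > c/(m+1)² for every positive integer m. -/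
open Real

/-- The set of twisted badly approximable numbers for `α`:
`Bad^∨_α = {x ∈ ℝ : inf_{m≥1} m·‖m·α − x‖ > 0}`, where `‖·‖` is the distance to a nearest
integer. -/
def badVee (α : ℝ) : Set ℝ :=
  {x : ℝ | ∃ ε > (0 : ℝ), ∀ m : ℕ, 0 < m →
    ε ≤ (m : ℝ) * |((m : ℝ) * α - x) - round ((m : ℝ) * α - x)|}

lemma abs_sub_round_neg (u : ℝ) : |(-u) - round (-u)| = |u - round u| := by
  rw [abs_sub_round_eq_min, abs_sub_round_eq_min]
  by_cases h : Int.fract u = 0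
  · rw [Int.fract_neg_eq_zero.mpr h, h]
  · rw [Int.fract_neg h, min_comm]
    congr 1
    ring

lemma aux_sin_lower (u : ℝ) : 2 * |u - round u| ≤ |Real.sin (π * u)| := by
  have hper : |Real.sin (π * u)| = |Real.sin (π * (u - round u))| := by
    have h : π * u = π * (u - round u) + (round u : ℤ) * π := by push_cast; ring
    rw [h, Real.sin_add_int_mul_pi]
    rcases Int.even_or_odd (round u) with he | ho
    · simp [he.neg_one_zpow, abs_mul]
    · simp [ho.neg_one_zpow, abs_mul]
  rw [hper]
  set v := u - round u with hv
  have hv2 : |v| ≤ 1 / 2 := abs_sub_round u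
  have hkey : Real.sin (π * |v|) = |Real.sin (π * v)| := by
    rcases abs_cases v with ⟨h, h0⟩ | ⟨h, h0⟩
    · rw [h, abs_of_nonneg]
      apply Real.sin_nonneg_of_nonneg_of_le_pi
      · positivity
      · nlinarith [Real.pi_pos, abs_nonneg v, hv2, h]
    · rw [h, mul_neg, Real.sin_neg, eq_comm]
      apply abs_of_nonpos
      apply Real.sin_nonpos_of_nonpos_of_neg_pi_le
      · nlinarith [Real.pi_pos]
      · nlinarith [Real.pi_pos, hv2, h]
  rw [← hkey]
  have hle := Real.mul_le_sin (x := π * |v|) (by positivity)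
    (by nlinarith [Real.pi_pos, hv2])
  have hπ : (π : ℝ) ≠ 0 := Real.pi_ne_zero
  calc 2 * |v| = 2 / π * (π * |v|) := by field_simp
    _ ≤ Real.sin (π * |v|) := hle

/-- Let `θ ∈ (0, π)` and let `δ ∈ (0, 1/8)` be such that `δ ∈ Bad^∨_{θ/(2π)}`,
`1/2 − δ ∈ Bad^∨_{θ/(2π)}`, and `−1/2 − δ ∈ Bad^∨_{θ/(2π)}`. Then there exists a constant
`c > 0` such that `|sin((m+1)θ)/sin θ − sin(2πδ)/sin θ| > c/(m+1)²` for every positive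
integer `m`. -/
theorem statement10 (θ δ : ℝ) (hθ : θ ∈ Set.Ioo 0 π) (hδ : δ ∈ Set.Ioo 0 (1 / 8))
    (hb1 : δ ∈ badVee (θ / (2 * π)))
    (hb2 : 1 / 2 - δ ∈ badVee (θ / (2 * π)))
    (hb3 : -(1 / 2) - δ ∈ badVee (θ / (2 * π))) :
    ∃ c > (0 : ℝ), ∀ m : ℕ, 0 < m →
      c / (m + 1 : ℝ) ^ 2 <
        |Real.sin ((m + 1) * θ) / Real.sin θ - Real.sin (2 * π * δ) / Real.sin θ| := by
  obtain ⟨ε₁, hε₁, h1⟩ := hb1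
  obtain ⟨ε₂, hε₂, h2⟩ := hb2
  have hπ : (0 : ℝ) < π := Real.pi_pos
  have hsθ : 0 < Real.sin θ := Real.sin_pos_of_pos_of_lt_pi hθ.1 hθ.2
  refine ⟨4 * ε₁ * ε₂ / Real.sin θ, by positivity, ?_⟩
  intro m hm
  set n : ℝ := (m : ℝ) + 1 with hn
  have hn0 : (0 : ℝ) < n := by positivity
  set α : ℝ := θ / (2 * π) with hα
  have key1 : ε₁ / n ≤ |(n * α - δ) - round (n * α - δ)| := by
    have h := h1 (m + 1) (Nat.succ_pos m)
    push_cast at h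
    rw [← hn] at h
    rw [div_le_iff₀ hn0]
    linarith [h]
  have key2 : ε₂ / n ≤ |(n * α - (1/2 - δ)) - round (n * α - (1/2 - δ))| := by
    have h := h2 (m + 1) (Nat.succ_pos m)
    push_cast at h
    rw [← hn] at h
    rw [div_le_iff₀ hn0]
    linarith [h]
  have hdiff : Real.sin (n * θ) - Real.sin (2 * π * δ)
      = 2 * Real.sin (π * (n * α - δ)) * Real.cos (π * (n * α + δ)) := by
    have e1 : (n * θ - 2 * π * δ) / 2 = π * (n * α - δ) := by
      rw [hα]; field_simp
    have e2 : (n * θ + 2 * π * δ) / 2 = π * (n * α + δ) := by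
      rw [hα]; field_simp
    rw [Real.sin_sub_sin, e1, e2]
  have hcos : Real.cos (π * (n * α + δ)) = Real.sin (π * ((1/2 - δ) - n * α)) := by
    rw [← Real.sin_pi_div_two_sub]
    congr 1
    ring
  have hs1 : 2 * (ε₁ / n) ≤ |Real.sin (π * (n * α - δ))| :=
    le_trans (by linarith [key1]) (aux_sin_lower (n * α - δ))
  have hs2 : 2 * (ε₂ / n) ≤ |Real.sin (π * ((1/2 - δ) - n * α))| := by
    refine le_trans ?_ (aux_sin_lower ((1/2 - δ) - n * α))
    have heq : |((1/2 - δ) - n * α) - round ((1/2 - δ) - n * α)|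
        = |(n * α - (1/2 - δ)) - round (n * α - (1/2 - δ))| := by
      have := abs_sub_round_neg (n * α - (1/2 - δ))
      rw [show -(n * α - (1/2 - δ)) = (1/2 - δ) - n * α by ring] at this
      exact this
    rw [heq]
    linarith [key2]
  have hprod : 8 * ε₁ * ε₂ / n ^ 2
      ≤ |Real.sin (n * θ) - Real.sin (2 * π * δ)| := by
    rw [hdiff, hcos, abs_mul, abs_mul, abs_two]
    have h1' : 0 ≤ 2 * (ε₁ / n) := by positivity
    have h2' : 0 ≤ 2 * (ε₂ / n) := by positivity
    have := mul_le_mul hs1 hs2 h2' (abs_nonneg _)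
    calc 8 * ε₁ * ε₂ / n ^ 2 = 2 * (2 * (ε₁ / n) * (2 * (ε₂ / n))) := by
          field_simp; ring
      _ ≤ 2 * (|Real.sin (π * (n * α - δ))| * |Real.sin (π * ((1/2 - δ) - n * α))|) := by
          linarith [this]
      _ = 2 * |Real.sin (π * (n * α - δ))| * |Real.sin (π * ((1/2 - δ) - n * α))| := by ring
  have habs : |Real.sin ((m + 1) * θ) / Real.sin θ - Real.sin (2 * π * δ) / Real.sin θ|
      = |Real.sin (n * θ) - Real.sin (2 * π * δ)| / Real.sin θ := by
    rw [div_sub_div_same, abs_div, abs_of_pos hsθ, hn]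
  rw [habs]
  rw [div_lt_div_iff₀ (by positivity) hsθ]
  have hfinal : 4 * ε₁ * ε₂ / Real.sin θ * Real.sin θ = 4 * ε₁ * ε₂ := by
    field_simp
  rw [hfinal]
  have h8 : 8 * ε₁ * ε₂ / n ^ 2 * n ^ 2 = 8 * ε₁ * ε₂ := by
    field_simp
  have h9 : 8 * ε₁ * ε₂ ≤ |Real.sin (n * θ) - Real.sin (2 * π * δ)| * n ^ 2 := by
    rw [← h8]
    exact mul_le_mul_of_nonneg_right hprod (by positivity)
  nlinarith [h9, mul_pos hε₁ hε₂]
end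

section
/- Let θ ∈ (0, π). The set {x ∈ (0, 1/(2 sin θ)) : there exists γ > 0 such that |sin((m+1)θ)/sin θ − x| > γ/m² for all positive integers m} has Hausdorff dimension 1. -/
open Real Filter
open scoped NNReal ENNReal

theorem statement11_null (a : ℕ → ℝ) :
    MeasureTheory.volume (⋂ n : ℕ, ⋃ m : ℕ,
      Metric.closedBall (a m) (1 / ((n + 1) * (m + 1) ^ 2))) = 0 := by
  set N := ⋂ n : ℕ, ⋃ m : ℕ, Metric.closedBall (a m) (1 / ((n + 1) * (m + 1) ^ 2))
  have hsum : Summable (fun m : ℕ => (1 : ℝ) / ((m : ℝ) + 1) ^ 2) := by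
    have h2 : Summable (fun m : ℕ => (1 : ℝ) / (m : ℝ) ^ 2) := by
      simpa using Real.summable_one_div_nat_rpow.mpr (by norm_num : (1:ℝ) < 2)
    exact ((summable_nat_add_iff 1).mpr h2).congr (fun m => by push_cast; ring_nf)
  set C : ℝ := ∑' m : ℕ, (1 : ℝ) / ((m : ℝ) + 1) ^ 2 with hC
  have hbound : ∀ n : ℕ, MeasureTheory.volume N ≤
      ENNReal.ofReal (2 / ((n : ℝ) + 1) * C) := by
    intro n
    have h1 : MeasureTheory.volume N ≤
        ∑' m : ℕ, MeasureTheory.volume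
          (Metric.closedBall (a m) (1 / (((n : ℝ) + 1) * ((m : ℝ) + 1) ^ 2))) :=
      le_trans (MeasureTheory.measure_mono (Set.iInter_subset _ n))
        (MeasureTheory.measure_iUnion_le _)
    have h2 : ∀ m : ℕ, MeasureTheory.volume
        (Metric.closedBall (a m) (1 / (((n : ℝ) + 1) * ((m : ℝ) + 1) ^ 2)))
        = ENNReal.ofReal (2 / ((n : ℝ) + 1) * (1 / ((m : ℝ) + 1) ^ 2)) := by
      intro m
      rw [Real.volume_closedBall]
      congr 1
      field_simp
    rw [show (fun m : ℕ => MeasureTheory.volume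
        (Metric.closedBall (a m) (1 / (((n : ℝ) + 1) * ((m : ℝ) + 1) ^ 2)))) =
        fun m : ℕ => ENNReal.ofReal (2 / ((n : ℝ) + 1) * (1 / ((m : ℝ) + 1) ^ 2)) from
        funext h2] at h1
    refine h1.trans ?_
    rw [← ENNReal.ofReal_tsum_of_nonneg (fun m => by positivity)
      (hsum.mul_left _), tsum_mul_left]
  have htend : Tendsto (fun n : ℕ => ENNReal.ofReal (2 / ((n : ℝ) + 1) * C))
      atTop (nhds 0) := by
    rw [show (0 : ENNReal) = ENNReal.ofReal (0 * C) by simp]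
    exact (ENNReal.continuous_ofReal.tendsto _).comp
      (((((tendsto_const_div_atTop_nhds_zero_nat 2).comp
        (tendsto_natCast_atTop_atTop.comp (tendsto_add_atTop_nat 1))).congr
        (fun n => by simp only [Function.comp_apply]; push_cast; ring)).mul_const C))
  have := ge_of_tendsto' htend (fun n => hbound n)
  simpa using this

/-- Let `θ ∈ (0, π)`. The set of `x ∈ (0, 1/(2 sin θ))` for which there exists
`γ > 0` such that `|sin((m+1)θ)/sin θ − x| > γ/m²` for all positive integers `m` has
Hausdorff dimension `1`. -/
theorem statement11 (θ : ℝ) (hθ : θ ∈ Set.Ioo 0 π) :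
    dimH {x : ℝ | x ∈ Set.Ioo 0 (1 / (2 * Real.sin θ)) ∧
      ∃ γ > (0 : ℝ), ∀ m : ℕ, 0 < m →
        γ / (m : ℝ) ^ 2 < |Real.sin ((m + 1) * θ) / Real.sin θ - x|} = 1 := by
  obtain ⟨hθ0, hθπ⟩ := hθ
  have hs : 0 < Real.sin θ := Real.sin_pos_of_pos_of_lt_pi hθ0 hθπ
  have hL : 0 < 1 / (2 * Real.sin θ) := by positivity
  set b : ℕ → ℝ := fun k => Real.sin (((k : ℝ) + 2) * θ) / Real.sin θ with hb
  set N := ⋂ n : ℕ, ⋃ k : ℕ, Metric.closedBall (b k) (1 / (((n : ℝ) + 1) * ((k : ℝ) + 1) ^ 2))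
    with hNdef
  have hN : MeasureTheory.volume N = 0 := statement11_null b
  set S := {x : ℝ | x ∈ Set.Ioo 0 (1 / (2 * Real.sin θ)) ∧
      ∃ γ > (0 : ℝ), ∀ m : ℕ, 0 < m →
        γ / (m : ℝ) ^ 2 < |Real.sin ((m + 1) * θ) / Real.sin θ - x|} with hS
  have hsub : Set.Ioo 0 (1 / (2 * Real.sin θ)) \ N ⊆ S := by
    rintro x ⟨hx, hxN⟩
    rw [hNdef, Set.mem_iInter] at hxN
    push_neg at hxN
    obtain ⟨n, hn⟩ := hxN
    rw [Set.mem_iUnion] at hn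
    push_neg at hn
    refine ⟨hx, 1 / ((n : ℝ) + 1), by positivity, ?_⟩
    intro m hm
    obtain ⟨k, rfl⟩ := Nat.exists_eq_add_of_lt hm
    have h1 := hn k
    rw [Metric.mem_closedBall, Real.dist_eq, not_le] at h1
    have hcast : ((0 + k + 1 : ℕ) : ℝ) = (k : ℝ) + 1 := by push_cast; ring
    rw [hcast]
    have h2 : Real.sin (((k : ℝ) + 1 + 1) * θ) / Real.sin θ = b k := by
      rw [hb]; ring_nf
    rw [h2, abs_sub_comm]
    calc 1 / ((n : ℝ) + 1) / ((k : ℝ) + 1) ^ 2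
        = 1 / (((n : ℝ) + 1) * ((k : ℝ) + 1) ^ 2) := by
          field_simp
      _ < |x - b k| := h1
  have hvol : MeasureTheory.volume S ≠ 0 := by
    have h1 : MeasureTheory.volume (Set.Ioo 0 (1 / (2 * Real.sin θ)) \ N)
        = MeasureTheory.volume (Set.Ioo (0:ℝ) (1 / (2 * Real.sin θ))) :=
      MeasureTheory.measure_diff_null hN
    have h2 := MeasureTheory.measure_mono (μ := MeasureTheory.volume) hsub
    rw [h1, Real.volume_Ioo] at h2
    intro h0
    rw [h0] at h2
    simp only [nonpos_iff_eq_zero, ENNReal.ofReal_eq_zero, sub_zero] at h2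
    linarith
  refine le_antisymm ((dimH_mono (Set.subset_univ _)).trans_eq Real.dimH_univ) ?_
  have h9 : ((1 : ℝ≥0) : ℝ≥0∞) ≤ dimH S := by
    apply le_dimH_of_hausdorffMeasure_ne_zero
    rw [show ((1 : ℝ≥0) : ℝ) = (1 : ℝ) by norm_num,
      MeasureTheory.hausdorffMeasure_real]
    exact hvol
  simpa using h9
end
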